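/- arXiv:1607.02279 — 13 statements merged into one kernel-verified Lean document; each statement's English description precedes it below -/
import Mathlib

section
/- Let x be a word of length n over an alphabet of size q, with minimum period π(x) satisfying π(x) ≤ n−ℓ+1 ≤ ℓ. Then for all 1 ≤ i < j ≤ π(x), the ℓ-grams x[i..i+ℓ−1] and x[j..j+ℓ−1] are distinct. -/
/-- `r` is a period of the word `x : Fin n → Fin q`. -/
def IsPeriod {q n : ℕ} (x : Fin n → Fin q) (r : ℕ) : Prop :=
  0 < r ∧ ∀ i : ℕ, ∀ h : i + r < n, x ⟨i, by omega⟩ = x ⟨i + r, h⟩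

/-- The minimum period `π(x)` of a word. -/
noncomputable def minPeriod {q n : ℕ} (x : Fin n → Fin q) : ℕ :=
  sInf {r | IsPeriod x r}

private lemma xeq_of_eq {q n : ℕ} (x : Fin n → Fin q) (a b : ℕ) (ha : a < n) (hb : b < n)
    (h : a = b) : x ⟨a, ha⟩ = x ⟨b, hb⟩ := by subst h; rfl

private lemma period_mul {q n : ℕ} (x : Fin n → Fin q) {p : ℕ} (hp : IsPeriod x p) :
    ∀ m a : ℕ, ∀ h : a + m * p < n,
      x ⟨a, Nat.lt_of_le_of_lt (Nat.le_add_right a (m * p)) h⟩ = x ⟨a + m * p, h⟩ := by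
  intro m
  induction m with
  | zero => intro a h; exact xeq_of_eq x _ _ _ _ (by omega)
  | succ m ih =>
    intro a h
    have hmp : (m + 1) * p = m * p + p := by ring
    have h1 : a + m * p + p < n := by omega
    have h0 : a + m * p < n := by omega
    rw [ih a h0]
    have := hp.2 (a + m * p) h1
    rw [this]
    exact xeq_of_eq x _ _ _ _ (by omega)

private lemma period_congr {q n : ℕ} (x : Fin n → Fin q) {p : ℕ} (hp : IsPeriod x p)
    (a b : ℕ) (ha : a < n) (hb : b < n) (hab : a % p = b % p) :
    x ⟨a, ha⟩ = x ⟨b, hb⟩ := by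
  rcases le_total a b with hle | hle
  · have hd : p ∣ b - a := (Nat.modEq_iff_dvd' hle).mp hab
    obtain ⟨m, hm⟩ := hd
    rw [Nat.mul_comm] at hm
    have hb' : b = a + m * p := by omega
    have h : a + m * p < n := by omega
    rw [xeq_of_eq x b (a + m * p) hb h hb']
    exact period_mul x hp m a h
  · have hd : p ∣ a - b := (Nat.modEq_iff_dvd' hle).mp hab.symm
    obtain ⟨m, hm⟩ := hd
    rw [Nat.mul_comm] at hm
    have ha' : a = b + m * p := by omega
    have h : b + m * p < n := by omega
    rw [xeq_of_eq x a (b + m * p) ha h ha']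
    exact (period_mul x hp m b h).symm

/-- If `π(x) ≤ n - ℓ + 1 ≤ ℓ`, then any two ℓ-grams of `x` starting at distinct
(0-indexed) positions `i < j < π(x)` are distinct. -/
theorem stmt_0 (q n ℓ : ℕ) (x : Fin n → Fin q) (hℓn : ℓ ≤ n)
    (h1 : minPeriod x ≤ n - ℓ + 1) (h2 : n - ℓ + 1 ≤ ℓ)
    (i j : ℕ) (hij : i < j) (hj : j < minPeriod x) :
    ¬ (∀ k : ℕ, k < ℓ → ∀ (hik : i + k < n) (hjk : j + k < n),
        x ⟨i + k, hik⟩ = x ⟨j + k, hjk⟩) := by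
  intro hall
  set p := minPeriod x with hpdef
  have hℓ0 : 0 < ℓ := by omega
  have hn0 : 0 < n := by omega
  have hne : Set.Nonempty {r | IsPeriod x r} := ⟨n, hn0, fun a ha => by omega⟩
  have hp : IsPeriod x p := Nat.sInf_mem hne
  have hp0 : 0 < p := hp.1
  set r := j - i with hr
  have hr0 : 0 < r := by omega
  have hrp : r < p := by omega
  have hpℓ : p ≤ ℓ := by omega
  -- n ≤ 2ℓ - 1
  have hn2ℓ : n + 1 ≤ 2 * ℓ := by omega
  have hper : IsPeriod x r := by
    refine ⟨hr0, fun s hs => ?_⟩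
    have hMi : i ≤ p * n := by nlinarith
    set t := i + (s + (p * n - i)) % p with ht
    have htmod : t % p = s % p := by
      have h2' : i + (s + (p * n - i)) = s + p * n := by omega
      rw [ht, Nat.add_mod_mod, h2', Nat.add_mul_mod_self_left]
    have hti : i ≤ t := Nat.le_add_right _ _
    have htp : t < i + p := by
      have := Nat.mod_lt (s + (p * n - i)) hp0; omega
    have htn : t < n := by omega
    have htrn : t + r < n := by omega
    have hsn : s < n := by omega
    -- x s = x t
    have e1 : x ⟨s, hsn⟩ = x ⟨t, htn⟩ := period_congr x hp s t hsn htn htmod.symm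
    -- x t = x (t + r) via the gram equality with k = t - i
    have hk : t - i < ℓ := by omega
    have e2 : x ⟨t, htn⟩ = x ⟨t + r, htrn⟩ := by
      have := hall (t - i) hk (by omega) (by omega)
      rw [xeq_of_eq x t (i + (t - i)) htn (by omega) (by omega), this]
      exact xeq_of_eq x _ _ _ _ (by omega)
    -- x (t + r) = x (s + r)
    have e3 : x ⟨t + r, htrn⟩ = x ⟨s + r, hs⟩ := by
      exact period_congr x hp _ _ _ _ (Nat.ModEq.add_right r htmod)
    have : x ⟨s, hsn⟩ = x ⟨s + r, hs⟩ := e1.trans (e2.trans e3)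
    exact this
  have h3 : minPeriod x ≤ r := Nat.sInf_le hper
  omega
end

section
/- If two q-ary words x and x' of length n are root-conjugates (i.e., the root of x equals a rotation of the root of x') and their common minimum period r = π(x) divides n−ℓ+1, then x and x' have identical ℓ-gram profile vectors, i.e., every word z of length ℓ occurs equally often as an ℓ-gram in x and in x'. -/
attribute [local instance] Classical.propDecidable

/-- The ℓ-gram profile vector of `x`: for each `z` of length ℓ, the number of
occurrences of `z` as a contiguous substring of `x`. -/
noncomputable def profileVec (q n ℓ : ℕ) (x : Fin n → Fin q) : (Fin ℓ → Fin q) → ℕ :=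
  fun z => ((Finset.range (n + 1 - ℓ)).filter
    (fun i => ∀ k : Fin ℓ, ∀ h : i + k.val < n, x ⟨i + k.val, h⟩ = z k)).card

lemma per_mod {q n : ℕ} (x : Fin n → Fin q) {r : ℕ} (hr : IsPeriod x r) :
    ∀ i, ∀ h : i < n, x ⟨i, h⟩ = x ⟨i % r, lt_of_le_of_lt (Nat.mod_le _ _) h⟩ := by
  intro i
  induction i using Nat.strong_induction_on with
  | _ i ih =>
    intro h
    by_cases hir : i < r
    · congr 1
      exact Fin.ext (Nat.mod_eq_of_lt hir).symm
    · push_neg at hir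
      have hrpos := hr.1
      have h1 : (i - r) + r < n := by omega
      have e1 := hr.2 (i - r) h1
      have e2 := ih (i - r) (by omega) (by omega)
      have : x ⟨i, h⟩ = x ⟨(i - r) + r, h1⟩ := by
        congr 1; exact Fin.ext (by show i = i - r + r; omega)
      rw [this, ← e1, e2]
      congr 1
      exact Fin.ext (show (i - r) % r = i % r from (Nat.mod_eq_sub_mod hir).symm)

lemma cancel1 (N s i : ℕ) (hN : 0 < N) (hi : i < N) :
    ((i + s) % N + (N - s % N)) % N = i := by
  rw [Nat.mod_add_mod]
  have hs : s % N < N := Nat.mod_lt _ hN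
  have hd := Nat.div_add_mod s N
  have e : i + s + (N - s % N) = i + N + N * (s / N) := by omega
  rw [e, Nat.add_mul_mod_self_left, Nat.add_mod_right, Nat.mod_eq_of_lt hi]

lemma cancel2 (N s j : ℕ) (hN : 0 < N) (hj : j < N) :
    ((j + (N - s % N)) % N + s) % N = j := by
  rw [Nat.mod_add_mod]
  have hs : s % N < N := Nat.mod_lt _ hN
  have hd := Nat.div_add_mod s N
  have e : j + (N - s % N) + s = j + N + N * (s / N) := by omega
  rw [e, Nat.add_mul_mod_self_left, Nat.add_mod_right, Nat.mod_eq_of_lt hj]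

/-- If `x` and `x'` are root-conjugates (the root of `x` is a rotation of the root
of `x'`) and their common minimum period divides `n - ℓ + 1`, then they have
identical ℓ-gram profile vectors. -/
theorem stmt_1 (q n ℓ : ℕ) (hℓn : ℓ ≤ n) (x x' : Fin n → Fin q)
    (hper : minPeriod x = minPeriod x')
    (hconj : ∃ s : ℕ, ∀ i : ℕ, i < minPeriod x →
      ∀ (h1 : i < n) (h2 : (i + s) % minPeriod x < n),
        x ⟨i, h1⟩ = x' ⟨(i + s) % minPeriod x, h2⟩)
    (hdvd : minPeriod x ∣ (n - ℓ + 1)) :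
    profileVec q n ℓ x = profileVec q n ℓ x' := by
  obtain ⟨s, hs⟩ := hconj
  set r := minPeriod x with hr_def
  have hne : {t | IsPeriod x t}.Nonempty :=
    ⟨n + 1, ⟨by omega, fun i h => absurd h (by omega)⟩⟩
  have hne' : {t | IsPeriod x' t}.Nonempty :=
    ⟨n + 1, ⟨by omega, fun i h => absurd h (by omega)⟩⟩
  have hxr : IsPeriod x r := Nat.sInf_mem hne
  have hx'r : IsPeriod x' r := by
    rw [hper]; exact Nat.sInf_mem hne'
  have hrpos : 0 < r := hxr.1
  set N := n + 1 - ℓ with hN_def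
  have hN : 0 < N := by omega
  have hrN : r ∣ N := by
    have : n - ℓ + 1 = N := by omega
    rwa [this] at hdvd
  -- key: for i < N, the gram of x at i equals the gram of x' at (i+s) % N
  have key : ∀ i : ℕ, i < N → ∀ k : Fin ℓ,
      ∀ (h1 : i + k.val < n) (h2 : (i + s) % N + k.val < n),
      x ⟨i + k.val, h1⟩ = x' ⟨(i + s) % N + k.val, h2⟩ := by
    intro i hi k h1 h2
    have hℓpos : 0 < ℓ := k.pos
    have hrn : r ≤ n := le_trans (Nat.le_of_dvd hN hrN) (by omega)
    rw [per_mod x hxr _ h1, per_mod x' hx'r _ h2]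
    have hm : (i + k.val) % r < r := Nat.mod_lt _ hrpos
    have e := hs ((i + k.val) % r) hm (by omega)
      (lt_of_lt_of_le (Nat.mod_lt _ hrpos) hrn)
    rw [e]
    congr 1
    apply Fin.ext
    show ((i + k.val) % r + s) % r = ((i + s) % N + k.val) % r
    rw [Nat.mod_add_mod, Nat.add_mod ((i+s) % N) k.val,
      Nat.mod_mod_of_dvd _ hrN, ← Nat.add_mod, ]
    ring_nf
  -- translate key into equivalence of filter predicates
  have keyIff : ∀ z : Fin ℓ → Fin q, ∀ i : ℕ, i < N →
      ((∀ k : Fin ℓ, ∀ h : i + k.val < n, x ⟨i + k.val, h⟩ = z k) ↔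
       (∀ k : Fin ℓ, ∀ h : (i + s) % N + k.val < n,
          x' ⟨(i + s) % N + k.val, h⟩ = z k)) := by
    intro z i hi
    constructor
    · intro hP k h
      have hℓpos : 0 < ℓ := k.pos
      have h1 : i + k.val < n := by omega
      rw [← key i hi k h1 h]
      exact hP k h1
    · intro hP k h
      have hℓpos : 0 < ℓ := k.pos
      have h2 : (i + s) % N + k.val < n := by
        have : (i + s) % N < N := Nat.mod_lt _ hN
        omega
      rw [key i hi k h h2]
      exact hP k h2
  funext z
  unfold profileVec
  apply Finset.card_nbij' (i := fun a => (a + s) % N)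
    (j := fun b => (b + (N - s % N)) % N)
  · intro a ha
    rw [Finset.mem_coe, Finset.mem_filter, Finset.mem_range] at ha ⊢
    obtain ⟨ha1, ha2⟩ := ha
    exact ⟨Nat.mod_lt _ hN, (keyIff z a ha1).mp ha2⟩
  · intro b hb
    rw [Finset.mem_coe, Finset.mem_filter, Finset.mem_range] at hb ⊢
    obtain ⟨hb1, hb2⟩ := hb
    have hg : (b + (N - s % N)) % N < N := Nat.mod_lt _ hN
    refine ⟨hg, ?_⟩
    have := (keyIff z _ hg)
    rw [cancel2 N s b hN hb1] at this
    exact this.mpr hb2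
  · intro a ha
    rw [Finset.mem_coe, Finset.mem_filter, Finset.mem_range] at ha
    exact cancel1 N s a hN ha.1
  · intro b hb
    rw [Finset.mem_coe, Finset.mem_filter, Finset.mem_range] at hb
    exact cancel2 N s b hN hb.1
end

section
/- Suppose ℓ ≤ n < 2ℓ and x, x' are distinct q-ary words of length n with identical ℓ-gram profile vectors. Then x and x' are root-conjugates and the minimum period π(x) divides n−ℓ+1. -/
attribute [local instance] Classical.propDecidable

lemma xeq {q n : ℕ} (x : Fin n → Fin q) {a b : ℕ} (ha : a < n) (hb : b < n) (h : a = b) :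
    x ⟨a, ha⟩ = x ⟨b, hb⟩ := by subst h; rfl

lemma isPeriod_sub {q n : ℕ} {x : Fin n → Fin q} {r s : ℕ} (hr : IsPeriod x r)
    (hs : IsPeriod x s) (hrs : r < s) (hsum : r + s ≤ n) : IsPeriod x (s - r) := by
  obtain ⟨hr0, hrp⟩ := hr
  obtain ⟨hs0, hsp⟩ := hs
  refine ⟨by omega, fun i h => ?_⟩
  by_cases hc : i + s < n
  · have h1 := hsp i hc
    have h2 := hrp (i + (s - r)) (by omega)
    exact h1.trans ((h2.trans (xeq x _ hc (by omega))).symm)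
  · have h1 := hrp (i - r) (by omega)
    have h2 := hsp (i - r) (by omega)
    calc x ⟨i, by omega⟩ = x ⟨i - r, by omega⟩ :=
          (h1.trans (xeq x _ (by omega) (by omega))).symm
      _ = x ⟨i + (s - r), h⟩ := h2.trans (xeq x _ h (by omega))

lemma isPeriod_gcd {q n : ℕ} {x : Fin n → Fin q} :
    ∀ k r s, r + s ≤ k → IsPeriod x r → IsPeriod x s → r + s ≤ n →
      IsPeriod x (Nat.gcd r s) := by
  intro k
  induction k with
  | zero => intro r s hk hr _ _; exact absurd hr.1 (by omega)
  | succ k ih =>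
    intro r s hk hr hs hn
    rcases lt_trichotomy r s with h | h | h
    · have hsub := isPeriod_sub hr hs h hn
      have hr0 := hr.1
      have := ih r (s - r) (by omega) hr hsub (by omega)
      rwa [Nat.gcd_sub_self_right (le_of_lt h)] at this
    · subst h; rwa [Nat.gcd_self]
    · have hsub := isPeriod_sub hs hr h (by omega)
      have hs0 := hs.1
      have := ih (r - s) s (by omega) hsub hs (by omega)
      rwa [Nat.gcd_sub_self_left (le_of_lt h)] at this

lemma isPeriod_mod {q n : ℕ} {x : Fin n → Fin q} {p : ℕ} (hp : IsPeriod x p) :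
    ∀ t, ∀ (ht : t < n) (ht2 : t % p < n), x ⟨t, ht⟩ = x ⟨t % p, ht2⟩ := by
  intro t
  induction t using Nat.strong_induction_on with
  | _ t ih =>
    intro ht ht2
    by_cases h : t < p
    · exact xeq x ht ht2 (Nat.mod_eq_of_lt h).symm
    · have hp0 := hp.1
      have h1 := hp.2 (t - p) (by omega)
      have h2 := ih (t - p) (by omega) (by omega) (by
        rw [← Nat.mod_eq_sub_mod (by omega)]; exact ht2)
      calc x ⟨t, ht⟩ = x ⟨t - p, by omega⟩ :=
            (h1.trans (xeq x _ ht (by omega))).symm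
        _ = x ⟨(t - p) % p, _⟩ := h2
        _ = x ⟨t % p, ht2⟩ := xeq x _ ht2 (Nat.mod_eq_sub_mod (by omega)).symm

def win {q : ℕ} (X : ℕ → Fin q) (L i : ℕ) : Fin L → Fin q := fun k => X (i + k.val)

noncomputable def cnt (P : Prop) : ℕ := @ite ℕ P (Classical.propDecidable P) 1 0

lemma cnt_pos {P : Prop} (h : P) : cnt P = 1 := by simp [cnt, h]

lemma cnt_neg {P : Prop} (h : ¬P) : cnt P = 0 := by simp [cnt, h]

lemma card_filter_cnt {α : Type*} (s : Finset α) (p : α → Prop) [DecidablePred p] :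
    (s.filter p).card = ∑ i ∈ s, cnt (p i) := by
  rw [Finset.card_filter]
  refine Finset.sum_congr rfl (fun i _ => ?_)
  by_cases h : p i
  · rw [if_pos h, cnt_pos h]
  · rw [if_neg h, cnt_neg h]

lemma card_win_filter {q n ℓ : ℕ} (hℓ : 0 < ℓ) (hℓn : ℓ ≤ n)
    (x : Fin n → Fin q) (X : ℕ → Fin q) (hX : ∀ t (ht : t < n), X t = x ⟨t, ht⟩)
    (z : Fin ℓ → Fin q) :
    ((Finset.range (n + 1 - ℓ)).filter (fun i => win X ℓ i = z)).card
      = profileVec q n ℓ x z := by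
  unfold profileVec
  congr 1
  apply Finset.filter_congr
  intro i hi
  simp only [Finset.mem_range] at hi
  constructor
  · intro hw k h
    have : win X ℓ i k = z k := by rw [hw]
    rw [← this, win, hX (i + k.val) h]
  · intro hcond
    funext k
    have hk : i + k.val < n := by have := k.isLt; omega
    show X (i + k.val) = z k
    rw [hX (i + k.val) hk]
    exact hcond k hk

lemma ml {q n ℓ : ℕ} (hℓ : 0 < ℓ) (hℓn : ℓ ≤ n)
    (x x' : Fin n → Fin q) (X X' : ℕ → Fin q)
    (hX : ∀ t (ht : t < n), X t = x ⟨t, ht⟩) (hX' : ∀ t (ht : t < n), X' t = x' ⟨t, ht⟩)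
    (hprof : profileVec q n ℓ x = profileVec q n ℓ x')
    (P : (Fin ℓ → Fin q) → Prop) :
    ((Finset.range (n + 1 - ℓ)).filter (fun i => P (win X ℓ i))).card
      = ((Finset.range (n + 1 - ℓ)).filter (fun i => P (win X' ℓ i))).card := by
  have key : ∀ (Y : ℕ → Fin q),
      ((Finset.range (n + 1 - ℓ)).filter (fun i => P (win Y ℓ i))).card
        = ∑ z ∈ Finset.univ.filter P,
            ((Finset.range (n + 1 - ℓ)).filter (fun i => win Y ℓ i = z)).card := by
    intro Y
    rw [Finset.card_eq_sum_card_fiberwise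
      (f := fun i => win Y ℓ i) (t := Finset.univ.filter P)
      (fun i hi => by
        simp only [Finset.mem_coe, Finset.mem_filter, Finset.mem_univ, true_and]
        exact (Finset.mem_filter.mp hi).2)]
    apply Finset.sum_congr rfl
    intro z hz
    congr 1
    rw [Finset.filter_filter]
    apply Finset.filter_congr
    intro i _
    constructor
    · exact fun h => h.2
    · intro h
      exact ⟨by rw [h]; exact (Finset.mem_filter.mp hz).2, h⟩
  rw [key X, key X']
  apply Finset.sum_congr rfl
  intro z _
  rw [card_win_filter hℓ hℓn x X hX z, card_win_filter hℓ hℓn x' X' hX' z, hprof]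

lemma step1 {q n e : ℕ} (x x' : Fin n → Fin q) (X X' : ℕ → Fin q)
    (hX : ∀ t (ht : t < n), X t = x ⟨t, ht⟩) (hX' : ∀ t (ht : t < n), X' t = x' ⟨t, ht⟩)
    (hen : e + 1 ≤ n) (hn2 : n < 2 * (e + 1))
    (hne : x ≠ x')
    (hprof : profileVec q n (e + 1) x = profileVec q n (e + 1) x') :
    (∀ k, k + (n - e) < n → X k = X (k + (n - e))) ∧
    (∀ k, k + (n - e) < n → X' k = X' (k + (n - e))) := by
  have hM : n + 1 - (e + 1) = n - e := by omega
  set m : ℕ := n - e with hmdef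
  have hm1 : 1 ≤ m := by omega
  have hme : m ≤ e + 1 := by omega
  have hmn : m + e = n := by omega
  have ml' : ∀ P : (Fin (e+1) → Fin q) → Prop,
      (∑ i ∈ Finset.range m, cnt (P (win X (e+1) i)))
        = ∑ i ∈ Finset.range m, cnt (P (win X' (e+1) i)) := by
    intro P
    have h := ml (by omega) hen x x' X X' hX hX' hprof P
    rw [hM] at h
    rwa [card_filter_cnt, card_filter_cnt] at h
  -- out-degree equality
  have out : ∀ v : Fin e → Fin q,
      (∑ i ∈ Finset.range m, cnt (win X e i = v))
        = ∑ i ∈ Finset.range m, cnt (win X' e i = v) := by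
    intro v
    have hiff : ∀ (Y : ℕ → Fin q) i, (win Y e i = v) ↔
        (∀ k : Fin e, win Y (e+1) i ⟨k.val, Nat.lt_succ_of_lt k.isLt⟩ = v k) := by
      intro Y i
      constructor
      · intro h k; exact congrFun h k
      · intro h; funext k; exact h k
    calc (∑ i ∈ Finset.range m, cnt (win X e i = v))
        = ∑ i ∈ Finset.range m,
            cnt (∀ k : Fin e, win X (e+1) i ⟨k.val, Nat.lt_succ_of_lt k.isLt⟩ = v k) :=
          Finset.sum_congr rfl (fun i _ => congrArg cnt (propext (hiff X i)))
      _ = ∑ i ∈ Finset.range m,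
            cnt (∀ k : Fin e, win X' (e+1) i ⟨k.val, Nat.lt_succ_of_lt k.isLt⟩ = v k) :=
          ml' (fun w => ∀ k : Fin e, w ⟨k.val, Nat.lt_succ_of_lt k.isLt⟩ = v k)
      _ = ∑ i ∈ Finset.range m, cnt (win X' e i = v) :=
          (Finset.sum_congr rfl (fun i _ => congrArg cnt (propext (hiff X' i)))).symm
  -- in-degree equality
  have inn : ∀ v : Fin e → Fin q,
      (∑ i ∈ Finset.range m, cnt (win X e (i+1) = v))
        = ∑ i ∈ Finset.range m, cnt (win X' e (i+1) = v) := by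
    intro v
    have hiff : ∀ (Y : ℕ → Fin q) i, (win Y e (i+1) = v) ↔
        (∀ k : Fin e, win Y (e+1) i ⟨k.val + 1, Nat.succ_lt_succ k.isLt⟩ = v k) := by
      intro Y i
      constructor
      · intro h k
        have h1 := congrFun h k
        show Y (i + (k.val + 1)) = v k
        rw [show i + (k.val + 1) = (i+1) + k.val from by omega]
        exact h1
      · intro h; funext k
        have h1 := h k
        show Y ((i+1) + k.val) = v k
        rw [show (i+1) + k.val = i + (k.val + 1) from by omega]
        exact h1
    calc (∑ i ∈ Finset.range m, cnt (win X e (i+1) = v))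
        = ∑ i ∈ Finset.range m,
            cnt (∀ k : Fin e, win X (e+1) i ⟨k.val + 1, Nat.succ_lt_succ k.isLt⟩ = v k) :=
          Finset.sum_congr rfl (fun i _ => congrArg cnt (propext (hiff X i)))
      _ = ∑ i ∈ Finset.range m,
            cnt (∀ k : Fin e, win X' (e+1) i ⟨k.val + 1, Nat.succ_lt_succ k.isLt⟩ = v k) :=
          ml' (fun w => ∀ k : Fin e, w ⟨k.val + 1, Nat.succ_lt_succ k.isLt⟩ = v k)
      _ = ∑ i ∈ Finset.range m, cnt (win X' e (i+1) = v) :=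
          (Finset.sum_congr rfl (fun i _ => congrArg cnt (propext (hiff X' i)))).symm
  -- endpoint identity
  have dagger : ∀ (Y : ℕ → Fin q) (v : Fin e → Fin q),
      (∑ i ∈ Finset.range m, cnt (win Y e i = v)) + cnt (win Y e m = v)
      = (∑ i ∈ Finset.range m, cnt (win Y e (i+1) = v)) + cnt (win Y e 0 = v) := by
    intro Y v
    have h1 := Finset.sum_range_succ (fun i => cnt (win Y e i = v)) m
    have h2 := Finset.sum_range_succ' (fun i => cnt (win Y e i = v)) m
    omega
  have combine : ∀ v : Fin e → Fin q,
      cnt (win X e m = v) + cnt (win X' e 0 = v)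
      = cnt (win X' e m = v) + cnt (win X e 0 = v) := by
    intro v
    have d1 := dagger X v
    have d2 := dagger X' v
    have o := out v
    have i := inn v
    omega
  -- main case analysis
  have hvm : win X e 0 = win X e m := by
    by_contra hcon
    have c1 := combine (win X e 0)
    have c2 := combine (win X e m)
    rw [cnt_neg (fun hh : win X e m = win X e 0 => hcon hh.symm), cnt_pos rfl] at c1
    rw [cnt_pos rfl, cnt_neg hcon] at c2
    have h10 : win X' e 0 = win X e 0 := by
      by_cases hA : win X' e 0 = win X e 0
      · exact hA
      · exfalso
        rw [cnt_neg hA] at c1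
        by_cases hB : win X' e m = win X e 0
        · rw [cnt_pos hB] at c1; omega
        · rw [cnt_neg hB] at c1; omega
    have h1m : win X' e m = win X e m := by
      by_cases hA : win X' e m = win X e m
      · exact hA
      · exfalso
        rw [cnt_neg hA] at c2
        by_cases hB : win X' e 0 = win X e m
        · rw [cnt_pos hB] at c2; omega
        · rw [cnt_neg hB] at c2; omega
    -- pointwise agreements
    have hpre : ∀ t, t < e → X' t = X t := by
      intro t ht
      have h : X' (0 + t) = X (0 + t) := congrFun h10 ⟨t, ht⟩
      rw [Nat.zero_add] at h
      exact h
    have hsuf : ∀ t, t < e → X' (m + t) = X (m + t) := by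
      intro t ht
      exact congrFun h1m ⟨t, ht⟩
    -- middle letter when m = e + 1
    have hmid : m = e + 1 → X' e = X e := by
      intro hme1
      have h := ml' (fun w => w ⟨e, Nat.lt_succ_self e⟩ = X e)
      rw [hme1] at h
      rw [Finset.sum_range_succ' (fun i => cnt (win X (e+1) i ⟨e, Nat.lt_succ_self e⟩ = X e)) e,
          Finset.sum_range_succ' (fun i => cnt (win X' (e+1) i ⟨e, Nat.lt_succ_self e⟩ = X e)) e] at h
      have heqt : ∀ i ∈ Finset.range e,
          cnt (win X (e+1) (i+1) ⟨e, Nat.lt_succ_self e⟩ = X e)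
          = cnt (win X' (e+1) (i+1) ⟨e, Nat.lt_succ_self e⟩ = X e) := by
        intro i hi
        have hi' := Finset.mem_range.mp hi
        have heq : win X' (e+1) (i+1) ⟨e, Nat.lt_succ_self e⟩
            = win X (e+1) (i+1) ⟨e, Nat.lt_succ_self e⟩ := by
          show X' ((i+1) + e) = X ((i+1) + e)
          rw [show (i+1) + e = m + i from by omega]
          exact hsuf i hi'
        exact congrArg cnt (propext (by rw [heq]))
      rw [Finset.sum_congr rfl heqt] at h
      have hX0 : win X (e+1) 0 ⟨e, Nat.lt_succ_self e⟩ = X e := by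
        show X (0 + e) = X e
        rw [Nat.zero_add]
      have h1 : cnt (win X (e+1) 0 ⟨e, Nat.lt_succ_self e⟩ = X e) = 1 := cnt_pos hX0
      by_cases hB : win X' (e+1) 0 ⟨e, Nat.lt_succ_self e⟩ = X e
      · have hXB : X' (0 + e) = X e := hB
        rw [Nat.zero_add] at hXB
        exact hXB
      · have h2 : cnt (win X' (e+1) 0 ⟨e, Nat.lt_succ_self e⟩ = X e) = 0 := cnt_neg hB
        omega
    -- derive x = x'
    apply hne
    funext j
    have hj := j.isLt
    have hcover : j.val < e ∨ m ≤ j.val ∨ (j.val = e ∧ m = e + 1) := by omega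
    have hXj : X j.val = x j := hX j.val j.isLt
    have hX'j : X' j.val = x' j := hX' j.val j.isLt
    rcases hcover with h | h | ⟨h1, h2⟩
    · rw [← hXj, ← hX'j, hpre j.val h]
    · have ht : j.val - m < e := by omega
      have hs := hsuf (j.val - m) ht
      rw [show m + (j.val - m) = j.val from by omega] at hs
      rw [← hXj, ← hX'j, hs]
    · rw [← hXj, ← hX'j, h1, hmid h2]
  -- now the conclusion for X
  have concl1 : ∀ k, k + m < n → X k = X (k + m) := by
    intro k hk
    have hke : k < e := by omega
    have h : X (0 + k) = X (m + k) := congrFun hvm ⟨k, hke⟩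
    rw [Nat.zero_add, Nat.add_comm m k] at h
    exact h
  -- conclusion for X'
  have hvm' : win X' e 0 = win X' e m := by
    have c := combine (win X' e 0)
    rw [hvm, cnt_pos rfl] at c
    by_cases hB : win X' e m = win X' e 0
    · exact hB.symm
    · exfalso
      rw [cnt_neg hB] at c
      by_cases hC : win X e m = win X' e 0
      · rw [cnt_pos hC] at c; omega
      · rw [cnt_neg hC] at c; omega
  have concl2 : ∀ k, k + m < n → X' k = X' (k + m) := by
    intro k hk
    have hke : k < e := by omega
    have h : X' (0 + k) = X' (m + k) := congrFun hvm' ⟨k, hke⟩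
    rw [Nat.zero_add, Nat.add_comm m k] at h
    exact h
  exact ⟨concl1, concl2⟩

lemma key (q n ℓ : ℕ) (hℓn : ℓ ≤ n) (hn2 : n < 2 * ℓ) (hn : 0 < n)
    (x x' : Fin n → Fin q) (hne : x ≠ x')
    (hprof : profileVec q n ℓ x = profileVec q n ℓ x') :
    minPeriod x ∣ (n - ℓ + 1) ∧ IsPeriod x' (minPeriod x) ∧
      ∃ s : ℕ, ∀ j, ∀ (hj : j < n) (hj2 : (s + j) % minPeriod x < n),
        x' ⟨j, hj⟩ = x ⟨(s + j) % minPeriod x, hj2⟩ := by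
  obtain ⟨e, rfl⟩ : ∃ e, ℓ = e + 1 := ⟨ℓ - 1, by omega⟩
  set m : ℕ := n - e with hmdef
  have hm1 : 1 ≤ m := by omega
  have hme : m ≤ e + 1 := by omega
  have hmn : m + e = n := by omega
  set X : ℕ → Fin q := fun t => if h : t < n then x ⟨t, h⟩ else x ⟨0, hn⟩ with hXdef
  set X' : ℕ → Fin q := fun t => if h : t < n then x' ⟨t, h⟩ else x' ⟨0, hn⟩ with hX'def
  have hX : ∀ t (ht : t < n), X t = x ⟨t, ht⟩ := by
    intro t ht; rw [hXdef]; simp only []; rw [dif_pos ht]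
  have hX' : ∀ t (ht : t < n), X' t = x' ⟨t, ht⟩ := by
    intro t ht; rw [hX'def]; simp only []; rw [dif_pos ht]
  obtain ⟨hXm, hX'm⟩ := step1 x x' X X' hX hX' hℓn hn2 hne hprof
  have hPm : IsPeriod x m := by
    refine ⟨by omega, fun i h => ?_⟩
    have hh := hXm i h
    rw [hX i (by omega), hX (i + m) h] at hh
    exact hh
  have hP'm : IsPeriod x' m := by
    refine ⟨by omega, fun i h => ?_⟩
    have hh := hX'm i h
    rw [hX' i (by omega), hX' (i + m) h] at hh
    exact hh
  set p : ℕ := minPeriod x with hpdef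
  have hp : IsPeriod x p := Nat.sInf_mem (⟨m, hPm⟩ : {r | IsPeriod x r}.Nonempty)
  have hple : p ≤ m := Nat.sInf_le hPm
  have hp0 : 0 < p := hp.1
  have hpd : p ∣ m := by
    rcases eq_or_lt_of_le hple with he | hlt
    · rw [he]
    · have hg := isPeriod_gcd (p + m) p m le_rfl hp hPm (by omega)
      have h1 : p ≤ Nat.gcd p m := Nat.sInf_le hg
      have h2 : Nat.gcd p m ∣ p := Nat.gcd_dvd_left p m
      have h3 : Nat.gcd p m = p := le_antisymm (Nat.le_of_dvd hp0 h2) h1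
      calc p = Nat.gcd p m := h3.symm
        _ ∣ m := Nat.gcd_dvd_right p m
  have hdvd : minPeriod x ∣ (n - (e + 1) + 1) := by
    have : n - (e + 1) + 1 = m := by omega
    rw [this]
    exact hpd
  -- find occurrence of first window of x' in x
  have hml := ml (by omega) hℓn x x' X X' hX hX' hprof (fun w => w = win X' (e + 1) 0)
  have hM : n + 1 - (e + 1) = m := by omega
  rw [hM] at hml
  rw [card_filter_cnt, card_filter_cnt] at hml
  have hrhs : (1:ℕ) ≤ ∑ i ∈ Finset.range m, cnt (win X' (e+1) i = win X' (e+1) 0) := by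
    have h0 : cnt (win X' (e+1) 0 = win X' (e+1) 0) = 1 := cnt_pos rfl
    have hle := Finset.single_le_sum
      (f := fun i => cnt (win X' (e+1) i = win X' (e+1) 0))
      (fun i _ => Nat.zero_le _) (Finset.mem_range.mpr (show 0 < m by omega))
    have hle' : cnt (win X' (e+1) 0 = win X' (e+1) 0)
        ≤ ∑ i ∈ Finset.range m, cnt (win X' (e+1) i = win X' (e+1) 0) := hle
    omega
  have hex : ∃ s0, s0 < m ∧ win X (e+1) s0 = win X' (e+1) 0 := by
    by_contra hcon
    push_neg at hcon
    have hz : ∑ i ∈ Finset.range m, cnt (win X (e+1) i = win X' (e+1) 0) = 0 :=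
      Finset.sum_eq_zero (fun i hi => cnt_neg (hcon i (Finset.mem_range.mp hi)))
    omega
  obtain ⟨s0, hs0m, hw⟩ := hex
  -- base case of the rotation formula
  have base : ∀ j, j ≤ e → ∀ (hj : j < n) (hj2 : (s0 + j) % p < n),
      x' ⟨j, hj⟩ = x ⟨(s0 + j) % p, hj2⟩ := by
    intro j hje hj hj2
    have h1 : X (s0 + j) = X' (0 + j) := congrFun hw ⟨j, by omega⟩
    rw [Nat.zero_add] at h1
    have hlt : s0 + j < n := by omega
    rw [hX (s0 + j) hlt, hX' j hj] at h1
    exact h1.symm.trans (isPeriod_mod hp (s0 + j) hlt hj2)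
  have hC : ∀ j, ∀ (hj : j < n) (hj2 : (s0 + j) % p < n),
      x' ⟨j, hj⟩ = x ⟨(s0 + j) % p, hj2⟩ := by
    intro j hj hj2
    by_cases hje : j ≤ e
    · exact base j hje hj hj2
    · have hjm : j - m ≤ e := by omega
      have hjmn : j - m < n := by omega
      have hmod : (s0 + (j - m)) % p = (s0 + j) % p := by
        obtain ⟨c, hc⟩ := hpd
        have hrew : s0 + j = (s0 + (j - m)) + p * c := by omega
        rw [hrew, Nat.add_mul_mod_self_left]
      have h2 : x' ⟨j - m, hjmn⟩ = x' ⟨j, hj⟩ := by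
        have hh := hP'm.2 (j - m) (by omega)
        exact hh.trans (xeq x' _ hj (by omega))
      have h3 := base (j - m) hjm hjmn (by omega)
      rw [← h2, h3]
      exact xeq x _ hj2 hmod
  have hper' : IsPeriod x' p := by
    refine ⟨hp0, fun i h => ?_⟩
    have hpn : p ≤ n := by omega
    have hm1' : (s0 + i) % p < n := by
      have := Nat.mod_lt (s0 + i) hp0
      omega
    have hm2' : (s0 + (i + p)) % p < n := by
      have := Nat.mod_lt (s0 + (i + p)) hp0
      omega
    have e1 := hC i (by omega) hm1'
    have e2 := hC (i + p) h hm2'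
    have hmm : (s0 + i) % p = (s0 + (i + p)) % p := by
      have h1 : s0 + (i + p) = (s0 + i) + p := by omega
      rw [h1, Nat.add_mod_right]
    rw [e1, e2]
    exact xeq x _ _ hmm
  exact ⟨hdvd, hper', ⟨s0, hC⟩⟩

lemma mod_shift (p s0 i : ℕ) (hp0 : 0 < p) (hip : i < p) :
    (s0 + (i + (p - s0 % p)) % p) % p = i := by
  have hmod : s0 % p < p := Nat.mod_lt _ hp0
  have hd := Nat.div_add_mod s0 p
  calc (s0 + (i + (p - s0 % p)) % p) % p
      = (s0 % p + (i + (p - s0 % p)) % p % p) % p := by rw [Nat.add_mod]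
    _ = (s0 % p + (i + (p - s0 % p)) % p) % p := by
        rw [Nat.mod_mod_of_dvd _ dvd_rfl]
    _ = (s0 + (i + (p - s0 % p))) % p := by rw [← Nat.add_mod]
    _ = (i + p * (s0 / p + 1)) % p := by
        congr 1
        rw [Nat.mul_succ]
        omega
    _ = i % p := Nat.add_mul_mod_self_left i p (s0 / p + 1)
    _ = i := Nat.mod_eq_of_lt hip

/-- If `ℓ ≤ n < 2ℓ` and distinct words `x, x'` have identical ℓ-gram profile
vectors, then they are root-conjugates (same minimum period, and the root of
`x` is a rotation of the root of `x'`) with `π(x) ∣ n - ℓ + 1`. -/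
theorem stmt_2 (q n ℓ : ℕ) (hℓn : ℓ ≤ n) (hn2 : n < 2 * ℓ)
    (x x' : Fin n → Fin q) (hne : x ≠ x')
    (hprof : profileVec q n ℓ x = profileVec q n ℓ x') :
    (minPeriod x = minPeriod x' ∧
      ∃ s : ℕ, ∀ i : ℕ, i < minPeriod x →
        ∀ (h1 : i < n) (h2 : (i + s) % minPeriod x < n),
          x ⟨i, h1⟩ = x' ⟨(i + s) % minPeriod x, h2⟩) ∧
    minPeriod x ∣ (n - ℓ + 1) := by
  have hn0 : 0 < n := by
    rcases Nat.eq_zero_or_pos n with h | h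
    · exfalso; apply hne; subst h; funext i; exact absurd i.isLt (by omega)
    · exact h
  obtain ⟨hdvd1, hper1, s0, hC1⟩ := key q n ℓ hℓn hn2 hn0 x x' hne hprof
  obtain ⟨hdvd2, hper2, s1, hC2⟩ := key q n ℓ hℓn hn2 hn0 x' x (Ne.symm hne) hprof.symm
  have hmin : minPeriod x = minPeriod x' :=
    le_antisymm (Nat.sInf_le hper2) (Nat.sInf_le hper1)
  have hpmem : IsPeriod x (minPeriod x) :=
    Nat.sInf_mem (⟨minPeriod x', hper2⟩ : {r | IsPeriod x r}.Nonempty)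
  have hp0 : 0 < minPeriod x := hpmem.1
  have hpn : minPeriod x ≤ n := by
    have h1 : 0 < n - ℓ + 1 := by omega
    have := Nat.le_of_dvd h1 hdvd1
    omega
  refine ⟨⟨hmin, ⟨minPeriod x - s0 % minPeriod x, ?_⟩⟩, hdvd1⟩
  intro i hip h1 h2
  have hj2 : (s0 + (i + (minPeriod x - s0 % minPeriod x)) % minPeriod x) % minPeriod x < n := by
    have := Nat.mod_lt (s0 + (i + (minPeriod x - s0 % minPeriod x)) % minPeriod x) hp0
    omega
  have hC := hC1 ((i + (minPeriod x - s0 % minPeriod x)) % minPeriod x) h2 hj2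
  have hidx := mod_shift (minPeriod x) s0 i hp0 hip
  exact (hC.trans (xeq x hj2 h1 hidx)).symm
end

section
/- For ℓ ≤ n < 2ℓ and q ≥ 2, the number of distinct ℓ-gram profile vectors satisfies P_q(n,ℓ) > q^{n−1}(q−1). -/
attribute [local instance] Classical.propDecidable

/-- `P_q(n,ℓ)`: the number of distinct ℓ-gram profile vectors of words in `[q]^n`. -/
noncomputable def numProfiles (q n ℓ : ℕ) : ℕ :=
  (Finset.univ.image (profileVec q n ℓ)).card

namespace Stmt4Aux

variable {q n ℓ : ℕ}

def win (hn : 0 < n) (L : ℕ) (x : Fin n → Fin q) (i : ℕ) : Fin L → Fin q :=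
  fun k => x ⟨(i + k.val) % n, Nat.mod_lt _ hn⟩

lemma win_apply (hn : 0 < n) {L : ℕ} (x : Fin n → Fin q) {i : ℕ} (k : Fin L)
    (h : i + k.val < n) : win hn L x i k = x ⟨i + k.val, h⟩ := by
  simp only [win]
  congr 1
  exact Fin.ext (by simp [Nat.mod_eq_of_lt h])

lemma profile_count (hn : 0 < n) (hℓn : ℓ ≤ n) (x : Fin n → Fin q)
    (z : Fin ℓ → Fin q) :
    profileVec q n ℓ x z = ((Multiset.range (n + 1 - ℓ)).map (win hn ℓ x)).count z := by
  rw [Multiset.count_map]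
  have h1 : profileVec q n ℓ x z = Multiset.card
      (Multiset.filter (fun i => ∀ k : Fin ℓ, ∀ h : i + k.val < n, x ⟨i + k.val, h⟩ = z k)
        (Multiset.range (n + 1 - ℓ))) := by
    rw [profileVec]
    rw [Finset.card, Finset.filter_val, Finset.range_val]
  rw [h1]
  congr 1
  apply Multiset.filter_congr
  intro i hi
  rw [Multiset.mem_range] at hi
  constructor
  · intro h
    funext k
    have hk : i + k.val < n := by omega
    rw [win_apply hn x k hk, h k hk]
  · intro h k hk
    rw [← win_apply hn x k hk, ← h]

lemma W_of_profile (hn : 0 < n) (hℓn : ℓ ≤ n) {x y : Fin n → Fin q}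
    (hp : profileVec q n ℓ x = profileVec q n ℓ y) :
    (Multiset.range (n + 1 - ℓ)).map (win hn ℓ x)
      = (Multiset.range (n + 1 - ℓ)).map (win hn ℓ y) := by
  apply Multiset.ext.2
  intro z
  rw [← profile_count hn hℓn, ← profile_count hn hℓn, hp]

lemma range_succ'' (m : ℕ) :
    Multiset.range (m + 1) = 0 ::ₘ (Multiset.range m).map (· + 1) := by
  induction m with
  | zero => rfl
  | succ m ih =>
    conv_rhs => rw [Multiset.range_succ]
    rw [Multiset.map_cons, Multiset.range_succ, ih, Multiset.cons_swap]

lemma cons_cancel {α : Type*} {a b : α} {s : Multiset α} (h : a ::ₘ s = b ::ₘ s) : a = b := by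
  classical
  by_contra hne
  have := congrArg (Multiset.count a) h
  rw [Multiset.count_cons_self, Multiset.count_cons_of_ne hne] at this
  omega

lemma pair_eq {α : Type*} {a b c d : α} (h : (a ::ₘ {b} : Multiset α) = c ::ₘ {d}) :
    (a = c ∧ b = d) ∨ (b = c ∧ d = a) := by
  rcases Multiset.cons_eq_cons.1 h with ⟨h1, h2⟩ | ⟨hne, cs, h1, h2⟩
  · exact Or.inl ⟨h1, Multiset.singleton_inj.1 h2⟩
  · have hcs : cs = 0 := by
      have := congrArg Multiset.card h1
      simpa using this.symm
    subst hcs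
    simp only [Multiset.cons_zero] at h1 h2
    exact Or.inr ⟨Multiset.singleton_inj.1 h1, Multiset.singleton_inj.1 h2⟩

lemma map_pref (hn : 0 < n) (hℓ : 2 ≤ ℓ) (x : Fin n → Fin q) (s : Multiset ℕ) :
    (s.map (win hn ℓ x)).map (fun f (k : Fin (ℓ - 1)) => f ⟨k.val, by omega⟩)
      = s.map (win hn (ℓ - 1) x) := by
  rw [Multiset.map_map]
  rfl

lemma map_suff (hn : 0 < n) (hℓ : 2 ≤ ℓ) (x : Fin n → Fin q) (s : Multiset ℕ) :
    (s.map (win hn ℓ x)).map (fun f (k : Fin (ℓ - 1)) => f ⟨k.val + 1, by omega⟩)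
      = s.map (fun i => win hn (ℓ - 1) x (i + 1)) := by
  rw [Multiset.map_map]
  apply Multiset.map_congr rfl
  intro i _
  funext k
  show x _ = x _
  congr 1
  exact Fin.ext (by simp [win]; ring_nf)

lemma cons_id (hn : 0 < n) (x : Fin n → Fin q) (L m : ℕ) :
    win hn L x 0 ::ₘ (Multiset.range m).map (fun i => win hn L x (i + 1))
      = win hn L x m ::ₘ (Multiset.range m).map (win hn L x) := by
  have h1 : (Multiset.range (m+1)).map (win hn L x)
      = win hn L x m ::ₘ (Multiset.range m).map (win hn L x) := by
    rw [Multiset.range_succ, Multiset.map_cons]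
  rw [← h1, range_succ'', Multiset.map_cons, Multiset.map_map]
  rfl

lemma pair_lemma (hn : 0 < n) (hℓ : 2 ≤ ℓ) {x y : Fin n → Fin q} {m : ℕ}
    (hW : (Multiset.range m).map (win hn ℓ x) = (Multiset.range m).map (win hn ℓ y)) :
    (win hn (ℓ-1) x 0 = win hn (ℓ-1) y 0 ∧ win hn (ℓ-1) x m = win hn (ℓ-1) y m)
    ∨ (win hn (ℓ-1) x m = win hn (ℓ-1) x 0 ∧ win hn (ℓ-1) y m = win hn (ℓ-1) y 0) := by
  set t : (Fin n → Fin q) → ℕ → Fin (ℓ-1) → Fin q := win hn (ℓ-1) with ht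
  have hP : (Multiset.range m).map (t x) = (Multiset.range m).map (t y) := by
    rw [← map_pref hn hℓ x, ← map_pref hn hℓ y, hW]
  have hS : (Multiset.range m).map (fun i => t x (i+1))
      = (Multiset.range m).map (fun i => t y (i+1)) := by
    rw [← map_suff hn hℓ x, ← map_suff hn hℓ y, hW]
  have hx := cons_id hn x (ℓ-1) m
  have hy := cons_id hn y (ℓ-1) m
  rw [hS, hP] at hx
  have hcomb : t x 0 ::ₘ t y m ::ₘ (Multiset.range m).map (t y)
      = t x m ::ₘ t y 0 ::ₘ (Multiset.range m).map (t y) := by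
    calc t x 0 ::ₘ t y m ::ₘ (Multiset.range m).map (t y)
        = t x 0 ::ₘ t y 0 ::ₘ (Multiset.range m).map (fun i => t y (i+1)) := by rw [hy]
      _ = t y 0 ::ₘ t x 0 ::ₘ (Multiset.range m).map (fun i => t y (i+1)) :=
          Multiset.cons_swap _ _ _
      _ = t y 0 ::ₘ t x m ::ₘ (Multiset.range m).map (t y) := by rw [hx]
      _ = t x m ::ₘ t y 0 ::ₘ (Multiset.range m).map (t y) := Multiset.cons_swap _ _ _
  have hpair : (t x 0 ::ₘ {t y m} : Multiset _) = t x m ::ₘ {t y 0} := by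
    have h2 : (t x 0 ::ₘ {t y m}) + (Multiset.range m).map (t y)
        = (t x m ::ₘ {t y 0}) + (Multiset.range m).map (t y) := by
      simpa [Multiset.cons_add] using hcomb
    exact add_right_cancel h2
  rcases pair_eq hpair with ⟨h1, h2⟩ | ⟨h1, h2⟩
  · exact Or.inr ⟨h1.symm, h2⟩
  · exact Or.inl ⟨h2.symm, h1.symm⟩

/-- `x` is `m`-periodic -/
def per (m : ℕ) (x : Fin n → Fin q) : Prop :=
  ∀ p : ℕ, ∀ h : p + m < n, x ⟨p, by omega⟩ = x ⟨p + m, h⟩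

lemma key (hn : 0 < n) (hℓ : 2 ≤ ℓ) {m : ℕ} (hm : m + ℓ = n + 1) (hmℓ : m ≤ ℓ)
    {x y : Fin n → Fin q}
    (hW : (Multiset.range m).map (win hn ℓ x) = (Multiset.range m).map (win hn ℓ y))
    (hnper : ¬ per m x) : x = y := by
  rcases pair_lemma hn hℓ hW with ⟨h0, hm'⟩ | ⟨hx1, hy1⟩
  · funext p
    by_cases h1 : p.val < ℓ - 1
    · have := congrFun h0 ⟨p.val, h1⟩
      rw [win_apply hn x _ (by omega), win_apply hn y _ (by omega)] at this
      simpa using this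
    · by_cases h2 : m ≤ p.val
      · have hk : p.val - m < ℓ - 1 := by omega
        have := congrFun hm' ⟨p.val - m, hk⟩
        rw [win_apply hn x _ (show m + (p.val - m) < n by omega),
            win_apply hn y _ (show m + (p.val - m) < n by omega)] at this
        have hfin : (⟨m + (p.val - m), by omega⟩ : Fin n) = p := Fin.ext (by simp; omega)
        rwa [hfin] at this
      · have hpv : p.val = m - 1 ∧ m = ℓ := by
          have := p.isLt
          omega
        obtain ⟨m', rfl⟩ : ∃ m', m = m' + 1 := ⟨m - 1, by omega⟩
        have hcol : (Multiset.range (m'+1)).map (fun i => x ⟨(i+0) % n, Nat.mod_lt _ hn⟩)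
            = (Multiset.range (m'+1)).map (fun i => y ⟨(i+0) % n, Nat.mod_lt _ hn⟩) := by
          have h := congrArg (Multiset.map (fun f : Fin ℓ → Fin q => f ⟨0, by omega⟩)) hW
          rw [Multiset.map_map, Multiset.map_map] at h
          exact h
        rw [Multiset.range_succ, Multiset.map_cons, Multiset.map_cons] at hcol
        have htail : (Multiset.range m').map (fun i => x ⟨(i+0) % n, Nat.mod_lt _ hn⟩)
            = (Multiset.range m').map (fun i => y ⟨(i+0) % n, Nat.mod_lt _ hn⟩) := by
          apply Multiset.map_congr rfl
          intro i hi
          rw [Multiset.mem_range] at hi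
          have hi' : i < ℓ - 1 := by omega
          have := congrFun h0 ⟨i, hi'⟩
          rw [win_apply hn x _ (by omega), win_apply hn y _ (by omega)] at this
          have e1 : (⟨(i+0) % n, Nat.mod_lt _ hn⟩ : Fin n) = ⟨0 + i, by omega⟩ := by
            apply Fin.ext
            show (i + 0) % n = 0 + i
            rw [Nat.mod_eq_of_lt (by omega)]
            omega
          rw [e1]
          exact this
        rw [htail] at hcol
        have hhead := cons_cancel hcol
        have e2 : (⟨(m'+0) % n, Nat.mod_lt _ hn⟩ : Fin n) = p := by
          apply Fin.ext
          show (m' + 0) % n = p.val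
          rw [Nat.mod_eq_of_lt (by omega)]
          omega
        rwa [e2] at hhead
  · exfalso
    apply hnper
    intro p hp'
    have hpl : p < ℓ - 1 := by omega
    have e1 : win hn (ℓ-1) x m ⟨p, hpl⟩ = x ⟨m + p, by omega⟩ := win_apply hn x _ (by omega)
    have e2 : win hn (ℓ-1) x 0 ⟨p, hpl⟩ = x ⟨0 + p, by omega⟩ := win_apply hn x _ (by omega)
    have h3 := (e1.symm.trans (congrFun hx1 ⟨p, hpl⟩)).trans e2
    have g1 : x (⟨p, by omega⟩ : Fin n) = x ⟨0 + p, by omega⟩ := congrArg x (Fin.ext (by simp))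
    have g2 : x (⟨m + p, by omega⟩ : Fin n) = x ⟨p + m, hp'⟩ :=
      congrArg x (Fin.ext (by simp [Nat.add_comm]))
    exact g1.trans (h3.symm.trans g2)

lemma key1 (hn : 0 < n) (hl : ℓ = n) {x y : Fin n → Fin q}
    (hp : profileVec q n ℓ x = profileVec q n ℓ y) : x = y := by
  subst hl
  have hW := W_of_profile hn le_rfl hp
  have h1 : ℓ + 1 - ℓ = 1 := by omega
  rw [h1] at hW
  have h2 : (Multiset.range 1) = ({0} : Multiset ℕ) := rfl
  rw [h2, Multiset.map_singleton, Multiset.map_singleton] at hW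
  have h3 : win hn ℓ x 0 = win hn ℓ y 0 := Multiset.singleton_inj.1 hW
  funext p
  have := congrFun h3 ⟨p.val, p.isLt⟩
  rw [win_apply hn x _ (by omega), win_apply hn y _ (by omega)] at this
  simpa using this

lemma per_card (hn : 0 < n) {m : ℕ} (hm0 : 0 < m) (hmn : m ≤ n) :
    (Finset.univ.filter (fun x : Fin n → Fin q => per m x)).card ≤ q ^ m := by
  classical
  have hle : (Finset.univ.filter (fun x : Fin n → Fin q => per m x)).card
      ≤ (Finset.univ : Finset (Fin m → Fin q)).card := by
    apply Finset.card_le_card_of_injOn (fun x => fun j : Fin m => x ⟨j.val, by omega⟩)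
    · intro x _
      exact Finset.mem_univ _
    · intro x hx y hy hxy
      rw [Finset.mem_coe, Finset.mem_filter] at hx hy
      have H : ∀ v, ∀ h : v < n, x ⟨v, h⟩ = y ⟨v, h⟩ := by
        intro v
        induction v using Nat.strong_induction_on with
        | _ v ih =>
          intro h
          by_cases hv : v < m
          · exact congrFun hxy ⟨v, hv⟩
          · have h1 : (v - m) + m < n := by omega
            have hx' := hx.2 (v - m) h1
            have hy' := hy.2 (v - m) h1
            have hrec := ih (v - m) (by omega) (by omega)
            have e : (⟨v - m + m, h1⟩ : Fin n) = ⟨v, h⟩ := Fin.ext (by simp; omega)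
            rw [e] at hx' hy'
            rw [← hx', ← hy']
            exact hrec
      funext p
      have := H p.val p.isLt
      simpa using this
  rw [Finset.card_univ, Fintype.card_fun, Fintype.card_fin, Fintype.card_fin] at hle
  exact hle

end Stmt4Aux

open Stmt4Aux in
/-- For `ℓ ≤ n < 2ℓ` and `q ≥ 2`, `P_q(n,ℓ) > q^{n−1}(q−1)`. -/
theorem stmt_4 (q n ℓ : ℕ) (hq : 2 ≤ q) (hℓn : ℓ ≤ n) (hn2 : n < 2 * ℓ) :
    q ^ (n - 1) * (q - 1) < numProfiles q n ℓ := by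
  have hn : 0 < n := by omega
  have hq0 : 0 < q ^ (n-1) := Nat.pow_pos (by omega)
  have hqn : q ^ n = q ^ (n-1) * q := by
    rw [← pow_succ]
    congr 1
    omega
  have hdist : q ^ (n-1) * (q-1) + q ^ (n-1) = q ^ (n-1) * q := by
    rw [← Nat.mul_succ]
    congr 1
    omega
  by_cases hln : ℓ = n
  · have hinj : Function.Injective (profileVec q n ℓ) := fun x y h => key1 hn hln h
    have hcard : numProfiles q n ℓ = q ^ n := by
      rw [numProfiles, Finset.card_image_of_injective _ hinj, Finset.card_univ,
        Fintype.card_fun, Fintype.card_fin, Fintype.card_fin]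
    omega
  · have hℓ2 : 2 ≤ ℓ := by omega
    set m := n + 1 - ℓ with hmdef
    have hm : m + ℓ = n + 1 := by omega
    have hmℓ : m ≤ ℓ := by omega
    set NP := Finset.univ.filter (fun x : Fin n → Fin q => ¬ per m x) with hNP
    set P := Finset.univ.filter (fun x : Fin n → Fin q => per m x) with hPdef
    have hkey : ∀ x y : Fin n → Fin q,
        profileVec q n ℓ x = profileVec q n ℓ y → ¬ per m x → x = y := by
      intro x y hp hnp
      exact key hn hℓ2 hm hmℓ (W_of_profile hn hℓn hp) hnp
    have hinj : Set.InjOn (profileVec q n ℓ) NP := by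
      intro x hx y hy hxy
      rw [Finset.mem_coe, hNP, Finset.mem_filter] at hx
      exact hkey x y hxy hx.2
    have h1 : (NP.image (profileVec q n ℓ)).card = NP.card :=
      Finset.card_image_of_injOn hinj
    have hpc : per m (fun _ : Fin n => (⟨0, by omega⟩ : Fin q)) := fun p h => rfl
    have hnotmem : profileVec q n ℓ (fun _ : Fin n => (⟨0, by omega⟩ : Fin q))
        ∉ NP.image (profileVec q n ℓ) := by
      rw [Finset.mem_image]
      rintro ⟨x, hx, hx2⟩
      rw [hNP, Finset.mem_filter] at hx
      have := hkey x _ hx2 hx.2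
      rw [this] at hx
      exact hx.2 hpc
    have hsub : insert (profileVec q n ℓ (fun _ : Fin n => (⟨0, by omega⟩ : Fin q)))
        (NP.image (profileVec q n ℓ)) ⊆ Finset.univ.image (profileVec q n ℓ) := by
      intro z hz
      rw [Finset.mem_insert] at hz
      rcases hz with hz | hz
      · exact Finset.mem_image.2 ⟨_, Finset.mem_univ _, hz.symm⟩
      · rcases Finset.mem_image.1 hz with ⟨x, _, hx2⟩
        exact Finset.mem_image.2 ⟨x, Finset.mem_univ _, hx2⟩
    have hcard : NP.card + 1 ≤ numProfiles q n ℓ := by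
      have hc := Finset.card_le_card hsub
      rw [Finset.card_insert_of_notMem hnotmem, h1] at hc
      exact hc
    have hPN : P.card + NP.card = q ^ n := by
      rw [hPdef, hNP, Finset.card_filter_add_card_filter_not, Finset.card_univ,
        Fintype.card_fun, Fintype.card_fin, Fintype.card_fin]
    have hP : P.card ≤ q ^ m := per_card hn (by omega) (by omega)
    have hqm : q ^ m ≤ q ^ (n-1) := Nat.pow_le_pow_right (by omega) (by omega)
    omega
end

section
/- In the special case ℓ = n−1 (with n ≥ 2 and q ≥ 2), the number of distinct (n−1)-gram profile vectors of q-ary words of length n equals q^n − C(q,2). -/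
attribute [local instance] Classical.propDecidable

section Aux

variable {q n : ℕ}

lemma apply_congr (x : Fin n → Fin q) {i j : ℕ} (hi : i < n) (hj : j < n)
    (hij : i = j) : x ⟨i, hi⟩ = x ⟨j, hj⟩ := by subst hij; rfl

/-- prefix of length n-1 -/
def pref (x : Fin n → Fin q) : Fin (n - 1) → Fin q :=
  fun k => x ⟨k.val, by have := k.isLt; omega⟩

/-- suffix of length n-1 -/
def suf (x : Fin n → Fin q) : Fin (n - 1) → Fin q :=
  fun k => x ⟨k.val + 1, by have := k.isLt; omega⟩

/-- alternating word abab... -/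
def alt (q n : ℕ) (a b : Fin q) : Fin n → Fin q :=
  fun i => if i.val % 2 = 0 then a else b

lemma profile_apply (hn : 2 ≤ n) (x : Fin n → Fin q) (z : Fin (n - 1) → Fin q) :
    profileVec q n (n - 1) x z
      = (if pref x = z then 1 else 0) + (if suf x = z then 1 else 0) := by
  unfold profileVec
  have h2 : n + 1 - (n - 1) = 2 := by omega
  rw [h2, Finset.card_filter, Finset.sum_range_succ, Finset.sum_range_succ,
    Finset.sum_range_zero]
  have h0 : (∀ k : Fin (n - 1), ∀ h : 0 + k.val < n, x ⟨0 + k.val, h⟩ = z k)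
      ↔ pref x = z := by
    constructor
    · intro h; funext k
      have hh : 0 + k.val < n := by have := k.isLt; omega
      exact (apply_congr x _ hh (by omega)).trans (h k hh)
    · intro h k hk
      exact (apply_congr x hk _ (by omega)).trans (congrFun h k)
  have h1 : (∀ k : Fin (n - 1), ∀ h : 1 + k.val < n, x ⟨1 + k.val, h⟩ = z k)
      ↔ suf x = z := by
    constructor
    · intro h; funext k
      have hh : 1 + k.val < n := by have := k.isLt; omega
      exact (apply_congr x _ hh (by omega)).trans (h k hh)
    · intro h k hk
      exact (apply_congr x hk _ (by omega)).trans (congrFun h k)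
  simp only [h0, h1]
  omega

lemma pair_aux {α : Type*} {a b c d : α}
    (h : ∀ z, ((if a = z then 1 else 0) + (if b = z then 1 else 0) : ℕ)
      = (if c = z then 1 else 0) + (if d = z then 1 else 0)) :
    (a = c ∧ b = d) ∨ (a = d ∧ b = c) := by
  classical
  by_cases hca : c = a
  · left
    refine ⟨hca.symm, ?_⟩
    have hb := h b
    simp only [hca, if_pos rfl] at hb
    by_cases hdb : d = b
    · exact hdb.symm
    · by_cases hab : a = b <;> simp [hab, hdb] at hb
  · have haa := h a
    simp only [if_pos rfl, if_neg hca] at haa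
    by_cases hda : d = a
    · right
      refine ⟨hda.symm, ?_⟩
      have hcc := h c
      have hac : ¬ a = c := fun hh => hca hh.symm
      simp only [if_pos rfl, if_neg hac] at hcc
      by_cases hbc : b = c
      · exact hbc
      · by_cases hdc : d = c <;> simp [hbc, hdc] at hcc
    · by_cases hba : b = a <;> simp [hba, hda] at haa

lemma profile_eq_iff (hn : 2 ≤ n) (x y : Fin n → Fin q) :
    profileVec q n (n - 1) x = profileVec q n (n - 1) y ↔
      ((pref x = pref y ∧ suf x = suf y) ∨ (pref x = suf y ∧ suf x = pref y)) := by
  constructor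
  · intro h
    refine pair_aux (fun z => ?_)
    have := congrFun h z
    rw [profile_apply hn, profile_apply hn] at this
    convert this using 2
    all_goals congr 1
  · intro h
    funext z
    rw [profile_apply hn, profile_apply hn]
    rcases h with ⟨h1, h2⟩ | ⟨h1, h2⟩
    · rw [h1, h2]
    · rw [h1, h2, Nat.add_comm]

lemma eq_of_pref_suf (hn : 2 ≤ n) (x y : Fin n → Fin q)
    (h1 : pref x = pref y) (h2 : suf x = suf y) : x = y := by
  funext i
  rcases i with ⟨m, hm⟩
  by_cases hm1 : m < n - 1
  · exact congrFun h1 ⟨m, hm1⟩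
  · have hmn : m = n - 1 := by omega
    have hk : n - 2 < n - 1 := by omega
    have := congrFun h2 ⟨n - 2, hk⟩
    show x ⟨m, hm⟩ = y ⟨m, hm⟩
    have e1 : x ⟨m, hm⟩ = x ⟨n - 2 + 1, by omega⟩ := by
      congr 1; exact Fin.ext (by simp; omega)
    have e2 : y ⟨n - 2 + 1, by omega⟩ = y ⟨m, hm⟩ := by
      congr 1; exact Fin.ext (by simp; omega)
    exact e1.trans (this.trans e2)

lemma alt_of_period (x : Fin n → Fin q)
    (hper : ∀ k (h2 : k + 2 < n) (h0 : k < n), x ⟨k + 2, h2⟩ = x ⟨k, h0⟩)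
    (h0 : 0 < n) (h1 : 1 < n) :
    x = alt q n (x ⟨0, h0⟩) (x ⟨1, h1⟩) := by
  have H : ∀ m, ∀ hm : m < n, x ⟨m, hm⟩ = alt q n (x ⟨0, h0⟩) (x ⟨1, h1⟩) ⟨m, hm⟩ := by
    intro m
    induction m using Nat.strong_induction_on with
    | _ m ih =>
      intro hm
      match m with
      | 0 => simp [alt]
      | 1 => simp [alt]
      | (k + 2) =>
        have pk : k < n := by omega
        have step1 : x ⟨k + 2, hm⟩ = x ⟨k, pk⟩ := hper k hm pk
        have step2 := ih k (by omega) pk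
        have step3 : alt q n (x ⟨0, h0⟩) (x ⟨1, h1⟩) ⟨k, pk⟩
            = alt q n (x ⟨0, h0⟩) (x ⟨1, h1⟩) ⟨k + 2, hm⟩ := by
          simp [alt, Nat.add_mod_right]
        exact step1.trans (step2.trans step3)
  funext i
  rcases i with ⟨m, hm⟩
  exact H m hm

lemma cross_case (hn : 2 ≤ n) (x y : Fin n → Fin q)
    (h1 : pref x = suf y) (h2 : suf x = pref y) :
    ∃ a b : Fin q, x = alt q n a b ∧ y = alt q n b a := by
  have e1 : ∀ k (hk : k < n - 1) (ha : k < n) (hb : k + 1 < n),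
      x ⟨k, ha⟩ = y ⟨k + 1, hb⟩ := fun k hk ha hb => congrFun h1 ⟨k, hk⟩
  have e2 : ∀ k (hk : k < n - 1) (ha : k + 1 < n) (hb : k < n),
      x ⟨k + 1, ha⟩ = y ⟨k, hb⟩ := fun k hk ha hb => congrFun h2 ⟨k, hk⟩
  have px : ∀ k (h2' : k + 2 < n) (h0' : k < n), x ⟨k + 2, h2'⟩ = x ⟨k, h0'⟩ := by
    intro k h2' h0'
    exact (e2 (k + 1) (by omega) h2' (by omega)).trans
      (e1 k (by omega) h0' (by omega)).symm
  have py : ∀ k (h2' : k + 2 < n) (h0' : k < n), y ⟨k + 2, h2'⟩ = y ⟨k, h0'⟩ := by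
    intro k h2' h0'
    exact (e1 (k + 1) (by omega) (by omega) h2').symm.trans
      (e2 k (by omega) (by omega) h0')
  have p0 : (0 : ℕ) < n := by omega
  have p1 : (1 : ℕ) < n := by omega
  have hx := alt_of_period x px p0 p1
  have hy := alt_of_period y py p0 p1
  have hb : y ⟨0, p0⟩ = x ⟨1, p1⟩ := (e2 0 (by omega) p1 p0).symm
  have ha : y ⟨1, p1⟩ = x ⟨0, p0⟩ := (e1 0 (by omega) p0 p1).symm
  refine ⟨x ⟨0, p0⟩, x ⟨1, p1⟩, hx, ?_⟩
  rw [hy, hb, ha]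

lemma alt_zero (hn : 2 ≤ n) (a b : Fin q) :
    alt q n a b ⟨0, by omega⟩ = a := by simp [alt]

lemma alt_one (hn : 2 ≤ n) (a b : Fin q) :
    alt q n a b ⟨1, by omega⟩ = b := by simp [alt]

lemma alt_inj (hn : 2 ≤ n) {a b c d : Fin q}
    (h : alt q n a b = alt q n c d) : a = c ∧ b = d := by
  constructor
  · have := congrFun h ⟨0, by omega⟩
    simpa [alt] using this
  · have := congrFun h ⟨1, by omega⟩
    simpa [alt] using this

lemma profile_swap (hn : 2 ≤ n) (a b : Fin q) :
    profileVec q n (n - 1) (alt q n a b) = profileVec q n (n - 1) (alt q n b a) := by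
  rw [profile_eq_iff hn]
  right
  constructor
  · funext k
    show alt q n a b ⟨k.val, _⟩ = alt q n b a ⟨k.val + 1, _⟩
    rcases Nat.mod_two_eq_zero_or_one k.val with h | h <;>
      simp [alt, Nat.add_mod, h]
  · funext k
    show alt q n a b ⟨k.val + 1, _⟩ = alt q n b a ⟨k.val, _⟩
    rcases Nat.mod_two_eq_zero_or_one k.val with h | h <;>
      simp [alt, Nat.add_mod, h]

end Aux

/-- For `ℓ = n−1` with `n ≥ 2` and `q ≥ 2`, `P_q(n,n−1) = q^n − C(q,2)`. -/
theorem stmt_5 (q n : ℕ) (hq : 2 ≤ q) (hn : 2 ≤ n) :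
    numProfiles q n (n - 1) = q ^ n - q.choose 2 := by
  classical
  set B : Finset (Fin n → Fin q) :=
    Finset.univ.filter (fun x => ∃ a b : Fin q, a < b ∧ x = alt q n a b) with hB
  have memB : ∀ x : Fin n → Fin q,
      x ∈ B ↔ ∃ a b : Fin q, a < b ∧ x = alt q n a b := by
    intro x; simp [hB]
  set G := (Finset.univ : Finset (Fin n → Fin q)) \ B with hG
  have memG : ∀ x : Fin n → Fin q, x ∈ G ↔ x ∉ B := by
    intro x; simp [hG]
  -- image over univ equals image over G
  have himg : Finset.univ.image (profileVec q n (n - 1))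
      = G.image (profileVec q n (n - 1)) := by
    apply Finset.Subset.antisymm
    · intro p hp
      simp only [Finset.mem_image] at hp ⊢
      obtain ⟨x, -, hx⟩ := hp
      by_cases hxB : x ∈ B
      · obtain ⟨a, b, hab, rfl⟩ := (memB x).mp hxB
        refine ⟨alt q n b a, ?_, ?_⟩
        · rw [memG, memB]
          rintro ⟨c, d, hcd, hcd'⟩
          obtain ⟨hc, hd⟩ := alt_inj hn hcd'.symm
          subst hc; subst hd
          exact absurd hab (not_lt_of_gt hcd)
        · rw [← hx]
          exact (profile_swap hn a b).symm
      · exact ⟨x, (memG x).mpr hxB, hx⟩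
    · exact Finset.image_subset_image (Finset.sdiff_subset)
  have hinj : Set.InjOn (profileVec q n (n - 1)) (G : Set (Fin n → Fin q)) := by
    intro x hxg y hyg hpe
    rcases (profile_eq_iff hn x y).mp hpe with ⟨h1, h2⟩ | ⟨h1, h2⟩
    · exact eq_of_pref_suf hn x y h1 h2
    · obtain ⟨a, b, hxa, hyb⟩ := cross_case hn x y h1 h2
      rcases lt_trichotomy a b with hab | hab | hab
      · exfalso
        have : x ∈ B := (memB x).mpr ⟨a, b, hab, hxa⟩
        exact ((memG x).mp (by simpa using hxg)) this
      · subst hab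
        rw [hxa, hyb]
      · exfalso
        have : y ∈ B := (memB y).mpr ⟨b, a, hab, hyb⟩
        exact ((memG y).mp (by simpa using hyg)) this
  -- cardinality of B
  have hcardB : B.card = q.choose 2 := by
    set S : Finset (Fin q × Fin q) :=
      (Finset.univ ×ˢ Finset.univ).filter (fun p => p.1 < p.2) with hS
    have hBS : B = S.image (fun p => alt q n p.1 p.2) := by
      ext x
      rw [memB]
      simp only [Finset.mem_image, hS, Finset.mem_filter, Finset.mem_product,
        Finset.mem_univ, true_and]
      constructor
      · rintro ⟨a, b, hab, rfl⟩
        exact ⟨(a, b), hab, rfl⟩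
      · rintro ⟨⟨a, b⟩, hab, rfl⟩
        exact ⟨a, b, hab, rfl⟩
    rw [hBS, Finset.card_image_of_injOn]
    · rw [hS, Finset.card_filter, Finset.sum_product, Finset.sum_comm]
      have inner : ∀ b : Fin q,
          (∑ a : Fin q, if a < b then (1 : ℕ) else 0) = b.val := by
        intro b
        rw [← Finset.card_filter]
        have : (Finset.univ.filter (fun a : Fin q => a < b)) = Finset.Iio b := by
          ext a; simp
        rw [this, Fin.card_Iio]
      simp_rw [inner]
      rw [Fin.sum_univ_eq_sum_range (fun i => i) q, Finset.sum_range_id,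
        Nat.choose_two_right]
    · rintro ⟨a, b⟩ - ⟨c, d⟩ - hcd
      obtain ⟨h1, h2⟩ := alt_inj hn hcd
      exact Prod.ext h1 h2
  rw [numProfiles, himg, Finset.card_image_of_injOn hinj, hG,
    Finset.card_sdiff_of_subset (Finset.filter_subset _ _), hcardB]
  congr 1
  simp [Finset.card_univ]
end

section
/- Let ℓ ≤ n < 2ℓ and let x be a q-ary word of length n with x[ℓ−1] ≠ x[n]. Then x is the unique word with its ℓ-gram profile vector: any word x' of length n with p(x',ℓ) = p(x,ℓ) equals x. -/
attribute [local instance] Classical.propDecidable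

namespace Stmt6Aux

variable {q n ℓ : ℕ}

noncomputable def win (hn : 0 < n) (y : Fin n → Fin q) (i : ℕ) : Fin ℓ → Fin q :=
  fun k => y ⟨(i + k.val) % n, Nat.mod_lt _ hn⟩

lemma win_congr (hn : 0 < n) (y : Fin n → Fin q) {a b : ℕ} {k j : Fin ℓ}
    (h : a + k.val = b + j.val) : win hn y a k = win hn y b j :=
  congrArg y (Fin.ext (by simp only [win, h]))

def lastIdx (hℓ2 : 2 ≤ ℓ) : Fin ℓ := ⟨ℓ - 1, by omega⟩
def zeroIdx (hℓ2 : 2 ≤ ℓ) : Fin ℓ := ⟨0, by omega⟩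

def Occ (hn : 0 < n) (y : Fin n → Fin q) (p : ℕ) (u : Fin ℓ → Fin q) : Prop :=
  ∀ k : Fin ℓ, k.val < ℓ - 1 → win hn y p k = u k

lemma marginalA (hn : 0 < n) (hℓ2 : 2 ≤ ℓ) (y : Fin n → Fin q) (u : Fin ℓ → Fin q) (M : ℕ) :
    ((Finset.range M).filter (fun i => Occ hn y i u)).card
      = ∑ c : Fin q, ((Finset.range M).filter
          (fun i => win hn y i = Function.update u (lastIdx hℓ2) c)).card := by
  rw [Finset.card_eq_sum_card_fiberwise
      (f := fun i => win hn y i (lastIdx hℓ2)) (t := Finset.univ)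
      (fun i _ => Finset.mem_univ _)]
  refine Finset.sum_congr rfl (fun c _ => ?_)
  rw [Finset.filter_filter]
  congr 1
  apply Finset.filter_congr
  intro i _
  constructor
  · rintro ⟨hocc, hlast⟩
    funext k
    by_cases hk : k.val < ℓ - 1
    · rw [hocc k hk, Function.update_of_ne
        (by intro hke; rw [hke] at hk; simp only [lastIdx] at hk; omega)]
    · have hkk : k = lastIdx hℓ2 := Fin.ext (by have := k.isLt; simp [lastIdx]; omega)
      rw [hkk, hlast, Function.update_self]
  · intro h
    refine ⟨fun k hk => ?_, ?_⟩
    · rw [congrFun h k, Function.update_of_ne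
        (by intro hke; rw [hke] at hk; simp only [lastIdx] at hk; omega)]
    · rw [congrFun h _, Function.update_self]

noncomputable def patB (hℓ2 : 2 ≤ ℓ) (c : Fin q) (u : Fin ℓ → Fin q) : Fin ℓ → Fin q :=
  fun k => if h : k.val = 0 then c else u ⟨k.val - 1, by omega⟩

lemma marginalB (hn : 0 < n) (hℓ2 : 2 ≤ ℓ) (y : Fin n → Fin q) (u : Fin ℓ → Fin q) (M : ℕ) :
    ((Finset.range M).filter (fun i => Occ hn y (i + 1) u)).card
      = ∑ c : Fin q, ((Finset.range M).filter
          (fun i => win hn y i = patB hℓ2 c u)).card := by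
  rw [Finset.card_eq_sum_card_fiberwise
      (f := fun i => win hn y i (zeroIdx hℓ2)) (t := Finset.univ)
      (fun i _ => Finset.mem_univ _)]
  refine Finset.sum_congr rfl (fun c _ => ?_)
  rw [Finset.filter_filter]
  congr 1
  apply Finset.filter_congr
  intro i _
  constructor
  · rintro ⟨hocc, h0⟩
    funext k
    by_cases hk : k.val = 0
    · have hkk : k = zeroIdx hℓ2 := Fin.ext hk
      rw [hkk, h0]
      simp [patB, zeroIdx]
    · have hk1 : k.val - 1 < ℓ - 1 := by have := k.isLt; omega
      have hjlt : k.val - 1 < ℓ := by have := k.isLt; omega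
      have hwin : win hn y i k = win hn y (i + 1) ⟨k.val - 1, hjlt⟩ :=
        win_congr hn y (show i + k.val = (i + 1) + (k.val - 1) by omega)
      rw [hwin, hocc _ hk1]
      simp [patB, hk]
  · intro h
    refine ⟨fun k hk => ?_, ?_⟩
    · have hjlt : k.val + 1 < ℓ := by omega
      have hwin : win hn y (i + 1) k = win hn y i ⟨k.val + 1, hjlt⟩ :=
        win_congr hn y (show (i + 1) + k.val = i + (k.val + 1) by omega)
      rw [hwin, congrFun h _]
      simp [patB]
    · rw [congrFun h _]
      simp [patB, zeroIdx]

lemma marginalLC (hn : 0 < n) (hℓ2 : 2 ≤ ℓ) (y : Fin n → Fin q) (c : Fin q) (M : ℕ) :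
    ((Finset.range M).filter (fun i => win hn y i (lastIdx hℓ2) = c)).card
      = ∑ z ∈ Finset.univ.filter (fun z : Fin ℓ → Fin q => z (lastIdx hℓ2) = c),
          ((Finset.range M).filter (fun i => win hn y i = z)).card := by
  rw [Finset.card_eq_sum_card_fiberwise (f := fun i => win hn y i)
      (t := Finset.univ.filter (fun z : Fin ℓ → Fin q => z (lastIdx hℓ2) = c))
      (fun i hi => Finset.mem_filter.mpr
        ⟨Finset.mem_univ _, (Finset.mem_filter.mp hi).2⟩)]
  refine Finset.sum_congr rfl (fun z hz => ?_)
  simp only [Finset.mem_filter] at hz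
  rw [Finset.filter_filter]
  congr 1
  apply Finset.filter_congr
  intro i _
  constructor
  · exact fun h => h.2
  · exact fun h => ⟨(congrFun h _).trans hz.2, h⟩


lemma win_eq' (hn : 0 < n) (y : Fin n → Fin q) (i : ℕ) (k : Fin ℓ) {p : ℕ} (hp : p < n)
    (h : i + k.val = p) : win hn y i k = y ⟨p, hp⟩ :=
  congrArg y (Fin.ext (by simp only [win]; rw [h]; exact Nat.mod_eq_of_lt hp))

lemma profile_eq (hn : 0 < n) (hℓn : ℓ ≤ n) (y : Fin n → Fin q) (z : Fin ℓ → Fin q) :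
    profileVec q n ℓ y z = ((Finset.range (n + 1 - ℓ)).filter (fun i => win hn y i = z)).card := by
  unfold profileVec
  congr 1
  apply Finset.filter_congr
  intro i hi
  simp only [Finset.mem_range] at hi
  constructor
  · intro h
    funext k
    have hk : i + k.val < n := by have := k.isLt; omega
    rw [win_eq' hn y i k hk rfl]
    exact h k hk
  · intro h k hk
    rw [← win_eq' hn y i k hk rfl]
    exact congrFun h k

end Stmt6Aux

open Stmt6Aux

/-- For `ℓ ≤ n < 2ℓ`, a word `x` whose (1-indexed) symbol at position `ℓ−1`
differs from its last symbol is uniquely determined by its ℓ-gram profile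
vector. (0-indexed positions `ℓ−2` and `n−1`.) -/
theorem stmt_6 (q n ℓ : ℕ) (hℓ2 : 2 ≤ ℓ) (hℓn : ℓ ≤ n) (hn2 : n < 2 * ℓ)
    (x : Fin n → Fin q)
    (hx : x ⟨ℓ - 2, by omega⟩ ≠ x ⟨n - 1, by omega⟩) :
    ∀ x' : Fin n → Fin q, profileVec q n ℓ x' = profileVec q n ℓ x → x' = x := by
  intro x' hp
  have hn : 0 < n := by omega
  obtain ⟨M, hM⟩ : ∃ M, n + 1 - ℓ = M + 1 := ⟨n - ℓ, by omega⟩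
  have hkl : ℓ - 2 < ℓ - 1 := by omega
  -- profile equality in window form
  have hw : ∀ z : Fin ℓ → Fin q,
      ((Finset.range (M + 1)).filter (fun i => win hn x' i = z)).card
        = ((Finset.range (M + 1)).filter (fun i => win hn x i = z)).card := by
    intro z
    have h := congrFun hp z
    rwa [profile_eq hn hℓn, profile_eq hn hℓn, hM] at h
  -- prefix (ℓ-1)-gram counts agree
  have keyA : ∀ u : Fin ℓ → Fin q,
      ((Finset.range (M + 1)).filter (fun i => Occ hn x' i u)).card
        = ((Finset.range (M + 1)).filter (fun i => Occ hn x i u)).card := by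
    intro u
    rw [marginalA hn hℓ2 x' u, marginalA hn hℓ2 x u]
    exact Finset.sum_congr rfl (fun c _ => hw _)
  -- suffix (ℓ-1)-gram counts agree
  have keyB : ∀ u : Fin ℓ → Fin q,
      ((Finset.range (M + 1)).filter (fun i => Occ hn x' (i + 1) u)).card
        = ((Finset.range (M + 1)).filter (fun i => Occ hn x (i + 1) u)).card := by
    intro u
    rw [marginalB hn hℓ2 x' u, marginalB hn hℓ2 x u]
    exact Finset.sum_congr rfl (fun c _ => hw _)
  -- the boundary indicator identity
  have key : ∀ u : Fin ℓ → Fin q,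
      (if Occ hn x' 0 u then 1 else 0) + (if Occ hn x (M + 1) u then 1 else 0)
        = (if Occ hn x 0 u then 1 else 0) + (if Occ hn x' (M + 1) u then 1 else 0) := by
    intro u
    have hA := keyA u
    have hB := keyB u
    have hd : ∀ y : Fin n → Fin q,
        ((Finset.range (M + 1)).filter (fun i => Occ hn y i u)).card
          = (∑ i ∈ Finset.range M, if Occ hn y (i + 1) u then 1 else 0)
            + (if Occ hn y 0 u then 1 else 0) := by
      intro y
      rw [Finset.card_filter, Finset.sum_range_succ']
    have hd' : ∀ y : Fin n → Fin q,
        ((Finset.range (M + 1)).filter (fun i => Occ hn y (i + 1) u)).card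
          = (∑ i ∈ Finset.range M, if Occ hn y (i + 1) u then 1 else 0)
            + (if Occ hn y (M + 1) u then 1 else 0) := by
      intro y
      rw [Finset.card_filter, Finset.sum_range_succ]
    rw [hd x', hd x] at hA
    rw [hd' x', hd' x] at hB
    omega
  -- x has no period M+1 at position ℓ-2
  have hO1 : Occ (ℓ := ℓ) hn x 0 (win hn x 0) := fun k _ => rfl
  have hO2 : Occ (ℓ := ℓ) hn x (M + 1) (win hn x (M + 1)) := fun k _ => rfl
  have hnP : ¬ Occ (ℓ := ℓ) hn x (M + 1) (win hn x 0) := by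
    intro h
    have h2 := h ⟨ℓ - 2, by omega⟩ hkl
    rw [win_eq' hn x (M + 1) _ (show n - 1 < n by omega)
        (show (M + 1) + (ℓ - 2) = n - 1 by omega)] at h2
    rw [win_eq' hn x 0 _ (show ℓ - 2 < n by omega)
        (show 0 + (ℓ - 2) = ℓ - 2 by omega)] at h2
    exact hx h2.symm
  have hnP2 : ¬ Occ (ℓ := ℓ) hn x 0 (win hn x (M + 1)) := by
    intro h
    have h2 := h ⟨ℓ - 2, by omega⟩ hkl
    rw [win_eq' hn x 0 _ (show ℓ - 2 < n by omega)
        (show 0 + (ℓ - 2) = ℓ - 2 by omega)] at h2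
    rw [win_eq' hn x (M + 1) _ (show n - 1 < n by omega)
        (show (M + 1) + (ℓ - 2) = n - 1 by omega)] at h2
    exact hx h2
  -- x' agrees with x on the prefix
  have hpre : Occ (ℓ := ℓ) hn x' 0 (win hn x 0) := by
    by_contra h1
    have hkey0 := key (win hn x 0)
    rw [if_neg h1, if_neg hnP, if_pos hO1] at hkey0
    split_ifs at hkey0 <;> omega
  -- x' agrees with x on the suffix
  have hsuf : Occ (ℓ := ℓ) hn x' (M + 1) (win hn x (M + 1)) := by
    by_contra h1
    have hkey1 := key (win hn x (M + 1))
    rw [if_pos hO2, if_neg hnP2, if_neg h1] at hkey1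
    split_ifs at hkey1 <;> omega
  have hagree : ∀ p : Fin n, p.val < ℓ - 1 ∨ M + 1 ≤ p.val → x' p = x p := by
    rintro p (hp | hp)
    · have h := hpre ⟨p.val, by omega⟩ (show p.val < ℓ - 1 from hp)
      have e1 := win_eq' hn x' 0 (⟨p.val, by omega⟩ : Fin ℓ) p.isLt
        (show 0 + p.val = p.val by omega)
      have e2 := win_eq' hn x 0 (⟨p.val, by omega⟩ : Fin ℓ) p.isLt
        (show 0 + p.val = p.val by omega)
      exact e1.symm.trans (h.trans e2)
    · have hplt : p.val - (M + 1) < ℓ - 1 := by have := p.isLt; omega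
      have h := hsuf ⟨p.val - (M + 1), by omega⟩ (show p.val - (M + 1) < ℓ - 1 from hplt)
      have e1 := win_eq' hn x' (M + 1) (⟨p.val - (M + 1), by omega⟩ : Fin ℓ) p.isLt
        (show (M + 1) + (p.val - (M + 1)) = p.val by omega)
      have e2 := win_eq' hn x (M + 1) (⟨p.val - (M + 1), by omega⟩ : Fin ℓ) p.isLt
        (show (M + 1) + (p.val - (M + 1)) = p.val by omega)
      exact e1.symm.trans (h.trans e2)
  funext p
  by_cases hp1 : p.val < ℓ - 1
  · exact hagree p (Or.inl hp1)
  by_cases hp2 : M + 1 ≤ p.val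
  · exact hagree p (Or.inr hp2)
  -- the remaining case: p = ℓ-1 and M+1 = ℓ
  have hplt := p.isLt
  have hpv : p.val = ℓ - 1 := by omega
  have hml : M + 1 = ℓ := by omega
  -- last-character counts agree
  have hLC : ((Finset.range (M + 1)).filter
        (fun i => win hn x' i (lastIdx hℓ2) = win hn x 0 (lastIdx hℓ2))).card
      = ((Finset.range (M + 1)).filter
        (fun i => win hn x i (lastIdx hℓ2) = win hn x 0 (lastIdx hℓ2))).card := by
    rw [marginalLC hn hℓ2 x' _ (M + 1), marginalLC hn hℓ2 x _ (M + 1)]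
    exact Finset.sum_congr rfl (fun z _ => hw _)
  rw [Finset.card_filter, Finset.card_filter, Finset.sum_range_succ',
      Finset.sum_range_succ'] at hLC
  have htail : ∀ i ∈ Finset.range M,
      (if win hn x' (i + 1) (lastIdx hℓ2) = win hn x 0 (lastIdx hℓ2) then 1 else 0)
        = (if win hn x (i + 1) (lastIdx hℓ2) = win hn x 0 (lastIdx hℓ2) then 1 else 0) := by
    intro i hi
    simp only [Finset.mem_range] at hi
    have h1 : win hn x' (i + 1) (lastIdx hℓ2) = win hn x' (M + 1) (⟨i, by omega⟩ : Fin ℓ) :=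
      win_congr hn x' (show (i + 1) + (ℓ - 1) = (M + 1) + i by omega)
    have h2 : win hn x (i + 1) (lastIdx hℓ2) = win hn x (M + 1) (⟨i, by omega⟩ : Fin ℓ) :=
      win_congr hn x (show (i + 1) + (ℓ - 1) = (M + 1) + i by omega)
    rw [h1, h2, hsuf ⟨i, by omega⟩ (show i < ℓ - 1 by omega)]
  rw [Finset.sum_congr rfl htail] at hLC
  have hfin : win hn x' 0 (lastIdx hℓ2) = win hn x 0 (lastIdx hℓ2) := by
    by_contra hcon
    rw [if_neg hcon, if_pos rfl] at hLC
    omega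
  have e1 := win_eq' hn x' 0 (lastIdx hℓ2) p.isLt (show 0 + (ℓ - 1) = p.val by omega)
  have e2 := win_eq' hn x 0 (lastIdx hℓ2) p.isLt (show 0 + (ℓ - 1) = p.val by omega)
  exact e1.symm.trans (hfin.trans e2)
end

section
/- The map encode₁ from [q]^{n−1} × {1,...,q−1} to [q]^n defined by: if c[n] ≠ c[ℓ−1] output c, else output c[1..n−1] appended with 0, is injective, and every word in its image satisfies x[ℓ−1] ≠ x[n]. Consequently there are at least q^{n−1}(q−1) words of length n with pairwise distinct ℓ-gram profile vectors when ℓ ≤ n < 2ℓ. -/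
attribute [local instance] Classical.propDecidable

/-- Algorithm 1: if the last symbol of `c` differs from the symbol at
(1-indexed) position `ℓ−1`, output `c`; otherwise replace the last symbol by `0`. -/
def encode1 (q n ℓ : ℕ) (hq : 0 < q) (hn : 0 < n) (hℓ2 : 2 ≤ ℓ) (hℓn : ℓ ≤ n)
    (c : Fin n → Fin q) : Fin n → Fin q :=
  if c ⟨n - 1, by omega⟩ ≠ c ⟨ℓ - 2, by omega⟩ then c
  else Function.update c ⟨n - 1, by omega⟩ ⟨0, hq⟩

def predP (q n ℓ : ℕ) (x : Fin n → Fin q) (z : Fin (ℓ-1) → Fin q) (j : ℕ) : Prop :=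
  ∀ k : Fin (ℓ-1), ∀ h : j + k.val < n, x ⟨j + k.val, h⟩ = z k

def ext0 (q ℓ : ℕ) (z : Fin (ℓ-1) → Fin q) (a : Fin q) : Fin ℓ → Fin q :=
  fun k => if h : k.val < ℓ - 1 then z ⟨k.val, h⟩ else a

def ext1 (q ℓ : ℕ) (a : Fin q) (z : Fin (ℓ-1) → Fin q) : Fin ℓ → Fin q :=
  fun k => if h : 0 < k.val then z ⟨k.val - 1, by have := k.isLt; omega⟩ else a

lemma card_ne_last (q n : ℕ) (hq : 0 < q) (hn : 0 < n) (j : Fin n) :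
    (Finset.univ.filter (fun c : Fin n → Fin q => c j ≠ ⟨0, hq⟩)).card
      = q ^ (n-1) * (q-1) := by
  classical
  rw [← Fintype.card_subtype]
  let v : Fin q := ⟨0, hq⟩
  have e : {c : Fin n → Fin q // c j ≠ v} ≃ {a : Fin q // a ≠ v} × ({i : Fin n // i ≠ j} → Fin q) :=
    { toFun := fun c => (⟨c.1 j, c.2⟩, fun i => c.1 i.1)
      invFun := fun p => ⟨fun i => if h : i = j then p.1.1 else p.2 ⟨i, h⟩, by simpa using p.1.2⟩
      left_inv := by
        intro c
        ext i
        by_cases h : (i : Fin n) = j <;> simp [h]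
      right_inv := by
        intro p
        refine Prod.ext (by simp) ?_
        funext i
        simp [i.2] }
  rw [Fintype.card_congr e, Fintype.card_prod, Fintype.card_fun]
  have h1 : Fintype.card {a : Fin q // a ≠ v} = q - 1 := by
    simp [Fintype.card_subtype_compl]
  have h2 : Fintype.card {i : Fin n // i ≠ j} = n - 1 := by
    simp [Fintype.card_subtype_compl]
  rw [h1, h2, Fintype.card_fin, mul_comm]

lemma sum_ext0 (q n ℓ : ℕ) (hℓ2 : 2 ≤ ℓ) (hℓn : ℓ ≤ n) (x : Fin n → Fin q)
    (z : Fin (ℓ-1) → Fin q) :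
    ∑ a : Fin q, profileVec q n ℓ x (ext0 q ℓ z a)
      = ∑ j ∈ Finset.range (n+1-ℓ), if predP q n ℓ x z j then 1 else 0 := by
  unfold profileVec
  simp only [Finset.card_filter]
  rw [Finset.sum_comm]
  refine Finset.sum_congr rfl (fun j hj => ?_)
  rw [Finset.mem_range] at hj
  have hjn : j + ℓ ≤ n := by omega
  have key : ∀ a : Fin q,
      (∀ k : Fin ℓ, ∀ h : j + k.val < n, x ⟨j + k.val, h⟩ = ext0 q ℓ z a k)
      ↔ (predP q n ℓ x z j ∧ x ⟨j + (ℓ-1), by omega⟩ = a) := by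
    intro a
    constructor
    · intro h
      constructor
      · intro k hk
        have := h ⟨k.val, by omega⟩ hk
        simpa [ext0, k.isLt] using this
      · have := h ⟨ℓ-1, by omega⟩ (by omega)
        simpa [ext0] using this
    · rintro ⟨h1, h2⟩ k hk
      by_cases hkl : k.val < ℓ - 1
      · have := h1 ⟨k.val, hkl⟩ hk
        simpa [ext0, hkl] using this
      · have hk1 : k.val = ℓ - 1 := by have := k.isLt; omega
        have he : ext0 q ℓ z a k = a := by simp [ext0, hk1]
        rw [he, ← h2]
        congr 1
        exact Fin.ext (by simp [hk1])
  calc ∑ a : Fin q, (if (∀ k : Fin ℓ, ∀ h : j + k.val < n, x ⟨j + k.val, h⟩ = ext0 q ℓ z a k) then 1 else 0)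
      = ∑ a : Fin q, (if (predP q n ℓ x z j ∧ x ⟨j + (ℓ-1), by omega⟩ = a) then 1 else 0) := by
        refine Finset.sum_congr rfl (fun a _ => ?_)
        exact if_congr (key a) rfl rfl
    _ = if predP q n ℓ x z j then 1 else 0 := by
        by_cases hP : predP q n ℓ x z j
        · simp [hP]
        · simp [hP]

lemma sum_ext1 (q n ℓ : ℕ) (hℓ2 : 2 ≤ ℓ) (hℓn : ℓ ≤ n) (x : Fin n → Fin q)
    (z : Fin (ℓ-1) → Fin q) :
    ∑ a : Fin q, profileVec q n ℓ x (ext1 q ℓ a z)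
      = ∑ j ∈ Finset.range (n+1-ℓ), if predP q n ℓ x z (j+1) then 1 else 0 := by
  unfold profileVec
  simp only [Finset.card_filter]
  rw [Finset.sum_comm]
  refine Finset.sum_congr rfl (fun j hj => ?_)
  rw [Finset.mem_range] at hj
  have hjn : j + ℓ ≤ n := by omega
  have key : ∀ a : Fin q,
      (∀ k : Fin ℓ, ∀ h : j + k.val < n, x ⟨j + k.val, h⟩ = ext1 q ℓ a z k)
      ↔ (predP q n ℓ x z (j+1) ∧ x ⟨j, by omega⟩ = a) := by
    intro a
    constructor
    · intro h
      constructor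
      · intro k hk
        have := h ⟨k.val + 1, by have := k.isLt; omega⟩ (by omega)
        have he : ext1 q ℓ a z ⟨k.val + 1, by have := k.isLt; omega⟩ = z k := by
          simp [ext1]
        rw [he] at this
        rw [← this]
        congr 1
        exact Fin.ext (by simp; omega)
      · have := h ⟨0, by omega⟩ (by omega)
        simpa [ext1] using this
    · rintro ⟨h1, h2⟩ k hk
      by_cases hk0 : 0 < k.val
      · have he : ext1 q ℓ a z k = z ⟨k.val - 1, by have := k.isLt; omega⟩ := by
          simp [ext1, hk0]
        rw [he]
        have := h1 ⟨k.val - 1, by have := k.isLt; omega⟩ (by omega)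
        rw [← this]
        congr 1
        exact Fin.ext (by simp; omega)
      · have hk1 : k.val = 0 := by omega
        have he : ext1 q ℓ a z k = a := by simp [ext1, hk1]
        rw [he, ← h2]
        congr 1
        exact Fin.ext (by simp [hk1])
  calc ∑ a : Fin q, (if (∀ k : Fin ℓ, ∀ h : j + k.val < n, x ⟨j + k.val, h⟩ = ext1 q ℓ a z k) then 1 else 0)
      = ∑ a : Fin q, (if (predP q n ℓ x z (j+1) ∧ x ⟨j, by omega⟩ = a) then 1 else 0) := by
        refine Finset.sum_congr rfl (fun a _ => ?_)
        exact if_congr (key a) rfl rfl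
    _ = if predP q n ℓ x z (j+1) then 1 else 0 := by
        by_cases hP : predP q n ℓ x z (j+1)
        · simp [hP]
        · simp [hP]

lemma sum_last (q n ℓ : ℕ) (hℓ2 : 2 ≤ ℓ) (hℓn : ℓ ≤ n) (x : Fin n → Fin q) (a : Fin q) :
    ∑ z : Fin ℓ → Fin q, (if z ⟨ℓ-1, by omega⟩ = a then profileVec q n ℓ x z else 0)
      = ∑ j ∈ Finset.range (n+1-ℓ),
          if (∀ h : j + (ℓ-1) < n, x ⟨j + (ℓ-1), h⟩ = a) then 1 else 0 := by
  unfold profileVec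
  simp only [Finset.card_filter]
  have step1 : ∀ z : Fin ℓ → Fin q,
      (if z ⟨ℓ-1, by omega⟩ = a then
        (∑ j ∈ Finset.range (n+1-ℓ),
          if (∀ k : Fin ℓ, ∀ h : j + k.val < n, x ⟨j + k.val, h⟩ = z k) then 1 else 0) else 0)
      = ∑ j ∈ Finset.range (n+1-ℓ),
          if (z ⟨ℓ-1, by omega⟩ = a ∧ ∀ k : Fin ℓ, ∀ h : j + k.val < n, x ⟨j + k.val, h⟩ = z k)
            then 1 else 0 := by
    intro z
    by_cases hz : z ⟨ℓ-1, by omega⟩ = a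
    · simp [hz]
    · simp [hz]
  rw [Finset.sum_congr rfl (fun z _ => step1 z), Finset.sum_comm]
  refine Finset.sum_congr rfl (fun j hj => ?_)
  rw [Finset.mem_range] at hj
  have hjn : j + ℓ ≤ n := by omega
  set W : Fin ℓ → Fin q := fun k => x ⟨j + k.val, by have := k.isLt; omega⟩ with hW
  have hwin : ∀ z : Fin ℓ → Fin q,
      (∀ k : Fin ℓ, ∀ h : j + k.val < n, x ⟨j + k.val, h⟩ = z k) ↔ z = W := by
    intro z
    constructor
    · intro h
      funext k
      exact (h k (by have := k.isLt; omega)).symm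
    · rintro rfl k hk
      rfl
  calc ∑ z : Fin ℓ → Fin q,
        (if (z ⟨ℓ-1, by omega⟩ = a ∧ ∀ k : Fin ℓ, ∀ h : j + k.val < n, x ⟨j + k.val, h⟩ = z k)
          then 1 else 0)
      = ∑ z : Fin ℓ → Fin q, (if (z ⟨ℓ-1, by omega⟩ = a ∧ z = W) then 1 else 0) := by
        refine Finset.sum_congr rfl (fun z _ => ?_)
        exact if_congr (and_congr_right fun _ => hwin z) rfl rfl
    _ = if W ⟨ℓ-1, by omega⟩ = a then 1 else 0 := by
        rw [Finset.sum_eq_single W]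
        · simp
        · intro z _ hz; simp [hz]
        · intro h; exact absurd (Finset.mem_univ W) h
    _ = if (∀ h : j + (ℓ-1) < n, x ⟨j + (ℓ-1), h⟩ = a) then 1 else 0 := by
        refine if_congr ?_ rfl rfl
        constructor
        · intro h _; exact h
        · intro h; exact h (by omega)


lemma recon (q n ℓ : ℕ) (hℓ2 : 2 ≤ ℓ) (hℓn : ℓ ≤ n) (hn2 : n < 2 * ℓ)
    (x y : Fin n → Fin q)
    (hx : x ⟨ℓ-2, by omega⟩ ≠ x ⟨n-1, by omega⟩)
    (hy : y ⟨ℓ-2, by omega⟩ ≠ y ⟨n-1, by omega⟩)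
    (hp : profileVec q n ℓ x = profileVec q n ℓ y) : x = y := by
  set N := n + 1 - ℓ with hN
  have hN1 : 1 ≤ N := by omega
  have hNℓ : N ≤ ℓ := by omega
  have hP : ∀ z : Fin (ℓ-1) → Fin q,
      (∑ j ∈ Finset.range N, if predP q n ℓ x z j then 1 else 0)
        = ∑ j ∈ Finset.range N, if predP q n ℓ y z j then 1 else 0 := by
    intro z
    rw [← sum_ext0 q n ℓ hℓ2 hℓn x z, ← sum_ext0 q n ℓ hℓ2 hℓn y z, hp]
  have hS : ∀ z : Fin (ℓ-1) → Fin q,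
      (∑ j ∈ Finset.range N, if predP q n ℓ x z (j+1) then 1 else 0)
        = ∑ j ∈ Finset.range N, if predP q n ℓ y z (j+1) then 1 else 0 := by
    intro z
    rw [← sum_ext1 q n ℓ hℓ2 hℓn x z, ← sum_ext1 q n ℓ hℓ2 hℓn y z, hp]
  have key : ∀ z : Fin (ℓ-1) → Fin q,
      (if predP q n ℓ x z 0 then 1 else 0) + (if predP q n ℓ y z N then 1 else 0)
        = (if predP q n ℓ y z 0 then 1 else 0) + (if predP q n ℓ x z N then 1 else 0) := by
    intro z
    have tx := (Finset.sum_range_succ (fun j => if predP q n ℓ x z j then 1 else 0) N).symm.trans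
      (Finset.sum_range_succ' (fun j => if predP q n ℓ x z j then 1 else 0) N)
    have ty := (Finset.sum_range_succ (fun j => if predP q n ℓ y z j then 1 else 0) N).symm.trans
      (Finset.sum_range_succ' (fun j => if predP q n ℓ y z j then 1 else 0) N)
    rw [hP z, hS z] at tx
    omega
  -- prefix agreement
  have hpre : ∀ k : Fin (ℓ-1), ∀ h : k.val < n, y ⟨k.val, h⟩ = x ⟨k.val, h⟩ := by
    set z1 : Fin (ℓ-1) → Fin q := fun k => x ⟨k.val, by have := k.isLt; omega⟩ with hz1
    have h0 : predP q n ℓ x z1 0 := by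
      intro k h
      simp only [hz1]
      congr 1
      exact Fin.ext (by simp)
    have hNx : ¬ predP q n ℓ x z1 N := by
      intro h
      have h2 := h ⟨ℓ-2, by omega⟩ (by omega)
      apply hx
      have e1 : (⟨N + (ℓ-2), by omega⟩ : Fin n) = ⟨n-1, by omega⟩ := Fin.ext (by simp; omega)
      rw [← e1]
      rw [h2]
    have k1 := key z1
    rw [if_pos h0, if_neg hNx] at k1
    have hy0 : predP q n ℓ y z1 0 := by
      by_contra hc
      rw [if_neg hc] at k1
      split_ifs at k1 <;> omega
    intro k h
    have := hy0 k (by simpa using h)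
    simp only [hz1] at this
    rw [← this]
    congr 1
    exact Fin.ext (by simp)
  -- suffix agreement
  have hsuf : ∀ k : Fin (ℓ-1), ∀ h : N + k.val < n, y ⟨N + k.val, h⟩ = x ⟨N + k.val, h⟩ := by
    set z2 : Fin (ℓ-1) → Fin q := fun k => x ⟨N + k.val, by have := k.isLt; omega⟩ with hz2
    have hN2 : predP q n ℓ x z2 N := by
      intro k h
      simp only [hz2]
    have h0x : ¬ predP q n ℓ x z2 0 := by
      intro h
      have h2 := h ⟨ℓ-2, by omega⟩ (by omega)
      apply hx
      simp only [hz2] at h2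
      have e1 : (⟨0 + (ℓ-2), by omega⟩ : Fin n) = ⟨ℓ-2, by omega⟩ := Fin.ext (by simp)
      rw [e1] at h2
      rw [h2]
      congr 1
      exact Fin.ext (by simp; omega)
    have k2 := key z2
    rw [if_neg h0x, if_pos hN2] at k2
    have hyN : predP q n ℓ y z2 N := by
      by_contra hc
      rw [if_neg hc] at k2
      split_ifs at k2 <;> omega
    intro k h
    have := hyN k h
    simp only [hz2] at this
    exact this
  -- middle position ℓ-1
  have hmid : y ⟨ℓ-1, by omega⟩ = x ⟨ℓ-1, by omega⟩ := by
    set a : Fin q := x ⟨ℓ-1, by omega⟩ with ha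
    have hL : (∑ j ∈ Finset.range N,
          if (∀ h : j + (ℓ-1) < n, x ⟨j + (ℓ-1), h⟩ = a) then 1 else 0)
        = ∑ j ∈ Finset.range N,
          if (∀ h : j + (ℓ-1) < n, y ⟨j + (ℓ-1), h⟩ = a) then 1 else 0 := by
      rw [← sum_last q n ℓ hℓ2 hℓn x a, ← sum_last q n ℓ hℓ2 hℓn y a, hp]
    have hNe : N = (N-1) + 1 := by omega
    rw [hNe, Finset.sum_range_succ', Finset.sum_range_succ'] at hL
    have hshift : ∀ j ∈ Finset.range (N-1),
        (if (∀ h : (j+1) + (ℓ-1) < n, x ⟨(j+1) + (ℓ-1), h⟩ = a) then 1 else 0)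
          = (if (∀ h : (j+1) + (ℓ-1) < n, y ⟨(j+1) + (ℓ-1), h⟩ = a) then (1:ℕ) else 0) := by
      intro j hj
      rw [Finset.mem_range] at hj
      refine if_congr ?_ rfl rfl
      have hlt : (j+1) + (ℓ-1) < n := by omega
      have hk : (j+1) + (ℓ-1) = N + (j + ℓ - N) := by omega
      have hkb : j + ℓ - N < ℓ - 1 := by omega
      have e1 : (⟨(j+1)+(ℓ-1), hlt⟩ : Fin n) = ⟨N + (j + ℓ - N), by omega⟩ := Fin.ext (by simp; omega)
      have := hsuf ⟨j + ℓ - N, hkb⟩ (by omega)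
      constructor
      · intro hh _
        rw [e1, this, ← e1]
        exact hh hlt
      · intro hh _
        rw [e1, ← this, ← e1]
        exact hh hlt
    rw [Finset.sum_congr rfl hshift] at hL
    have hL0 : (if (∀ h : 0 + (ℓ-1) < n, x ⟨0 + (ℓ-1), h⟩ = a) then (1:ℕ) else 0)
        = if (∀ h : 0 + (ℓ-1) < n, y ⟨0 + (ℓ-1), h⟩ = a) then 1 else 0 := by omega
    have hx0 : (∀ h : 0 + (ℓ-1) < n, x ⟨0 + (ℓ-1), h⟩ = a) := by
      intro h
      simp only [ha]
      congr 1
      exact Fin.ext (by simp)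
    rw [if_pos hx0] at hL0
    have hy0 : (∀ h : 0 + (ℓ-1) < n, y ⟨0 + (ℓ-1), h⟩ = a) := by
      by_contra hc
      rw [if_neg hc] at hL0
      omega
    have := hy0 (by omega)
    have e1 : (⟨0 + (ℓ-1), by omega⟩ : Fin n) = ⟨ℓ-1, by omega⟩ := Fin.ext (by simp)
    rw [e1] at this
    rw [this]
  -- conclude
  funext t
  rcases lt_trichotomy t.val (ℓ-1) with ht | ht | ht
  · have := hpre ⟨t.val, ht⟩ t.isLt
    have e1 : (⟨t.val, t.isLt⟩ : Fin n) = t := Fin.ext rfl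
    rw [e1] at this
    exact this.symm
  · have e1 : t = ⟨ℓ-1, by omega⟩ := Fin.ext (by simp [← ht])
    rw [e1]
    exact hmid.symm
  · have hkb : t.val - N < ℓ - 1 := by omega
    have hge : N ≤ t.val := by omega
    have := hsuf ⟨t.val - N, hkb⟩ (by omega)
    have e1 : (⟨N + (t.val - N), by omega⟩ : Fin n) = t := Fin.ext (by simp; omega)
    rw [e1] at this
    exact this.symm

/-- `encode₁` is injective on inputs with nonzero last symbol, its outputs satisfy
`x[ℓ−1] ≠ x[n]`, and consequently for `ℓ ≤ n < 2ℓ` there are at least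
`q^{n−1}(q−1)` words of length `n` with pairwise distinct ℓ-gram profile vectors. -/
theorem stmt_7 (q n ℓ : ℕ) (hq : 2 ≤ q) (hℓ2 : 2 ≤ ℓ) (hℓn : ℓ ≤ n) (hn2 : n < 2 * ℓ) :
    Set.InjOn (encode1 q n ℓ (by omega) (by omega) hℓ2 hℓn)
      {c : Fin n → Fin q | c ⟨n - 1, by omega⟩ ≠ ⟨0, by omega⟩} ∧
    (∀ c : Fin n → Fin q, c ⟨n - 1, by omega⟩ ≠ ⟨0, by omega⟩ →
      encode1 q n ℓ (by omega) (by omega) hℓ2 hℓn c ⟨ℓ - 2, by omega⟩ ≠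
        encode1 q n ℓ (by omega) (by omega) hℓ2 hℓn c ⟨n - 1, by omega⟩) ∧
    (∃ S : Finset (Fin n → Fin q), q ^ (n - 1) * (q - 1) ≤ S.card ∧
      ∀ x ∈ S, ∀ y ∈ S, x ≠ y → profileVec q n ℓ x ≠ profileVec q n ℓ y) := by
  have hne : (⟨ℓ-2, by omega⟩ : Fin n) ≠ ⟨n-1, by omega⟩ := Fin.ne_of_val_ne (show ℓ-2 ≠ n-1 by omega)
  have partA : Set.InjOn (encode1 q n ℓ (by omega) (by omega) hℓ2 hℓn)
      {c : Fin n → Fin q | c ⟨n - 1, by omega⟩ ≠ ⟨0, by omega⟩} := by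
    intro c hc c' hc' he
    simp only [Set.mem_setOf_eq] at hc hc'
    unfold encode1 at he
    split_ifs at he with h1 h2 h2
    · exact he
    · exfalso
      have := congrFun he ⟨n-1, by omega⟩
      simp only [Function.update_apply, if_pos rfl] at this
      exact hc this
    · exfalso
      have := congrFun he ⟨n-1, by omega⟩
      simp only [Function.update_apply, if_pos rfl] at this
      exact hc' this.symm
    · push_neg at h1 h2
      funext i
      by_cases hi : i = (⟨n-1, by omega⟩ : Fin n)
      · have hmid := congrFun he ⟨ℓ-2, by omega⟩
        simp only [Function.update_apply, if_neg hne] at hmid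
        rw [hi, h1, h2, hmid]
      · have := congrFun he i
        simp only [Function.update_apply, if_neg hi] at this
        exact this
  have partB : ∀ c : Fin n → Fin q, c ⟨n - 1, by omega⟩ ≠ ⟨0, by omega⟩ →
      encode1 q n ℓ (by omega) (by omega) hℓ2 hℓn c ⟨ℓ - 2, by omega⟩ ≠
        encode1 q n ℓ (by omega) (by omega) hℓ2 hℓn c ⟨n - 1, by omega⟩ := by
    intro c hc
    unfold encode1
    split_ifs with h
    · exact fun e => h e.symm
    · push_neg at h
      simp only [Function.update_apply, if_neg hne, if_pos rfl]
      rw [← h]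
      exact hc
  refine ⟨partA, partB, ?_⟩
  classical
  set T := Finset.univ.filter (fun c : Fin n → Fin q => c ⟨n-1, by omega⟩ ≠ ⟨0, by omega⟩) with hT
  refine ⟨T.image (encode1 q n ℓ (by omega) (by omega) hℓ2 hℓn), ?_, ?_⟩
  · have hinj : Set.InjOn (encode1 q n ℓ (by omega) (by omega) hℓ2 hℓn) ↑T := by
      intro a ha b hb hab
      rw [hT, Finset.coe_filter] at ha hb
      exact partA ha.2 hb.2 hab
    rw [Finset.card_image_of_injOn hinj]
    exact le_of_eq (card_ne_last q n (by omega) (by omega) ⟨n-1, by omega⟩).symm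
  · intro x hx y hy hxy hpe
    rw [Finset.mem_image] at hx hy
    obtain ⟨c, hcT, rfl⟩ := hx
    obtain ⟨c', hcT', rfl⟩ := hy
    rw [hT, Finset.mem_filter] at hcT hcT'
    apply hxy
    have hcx := partB c hcT.2
    have hcy := partB c' hcT'.2
    exact recon q n ℓ hℓ2 hℓn hn2 _ _ hcx hcy hpe
end

section
/- Let 2a ≤ ℓ, let A = {u_1,...,u_M} be a set of distinct addresses of length a over [q], and let x = z_1 z_2 ⋯ z_M and x' = z'_1 z'_2 ⋯ z'_M be distinct (A,ℓ)-addressable words. Then the set of ℓ-grams of x differs from the set of ℓ-grams of x'; in particular their ℓ-gram profile vectors differ. -/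
/-- `x` (viewed as a word of length `M*ℓ`, blocks `z_i = x[iℓ..iℓ+ℓ−1]`) is
`(A,ℓ)`-addressable for the address list `u : Fin M → (Fin a → Fin q)`:
(C1) each block `z_i` has prefix `u i`; (C2) no address occurs as an `a`-gram
of a block starting at (0-indexed) positions `1,…,ℓ−a`. -/
def Addressable (q a ℓ M : ℕ) (u : Fin M → (Fin a → Fin q)) (x : ℕ → Fin q) : Prop :=
  (∀ i : Fin M, ∀ k : Fin a, x (i.val * ℓ + k.val) = u i k) ∧
  (∀ i : Fin M, ∀ j : ℕ, 1 ≤ j → j + a ≤ ℓ → ∀ m : Fin M,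
    ¬ (∀ k : Fin a, x (i.val * ℓ + j + k.val) = u m k))

/-- The set of ℓ-grams of the length-`n` word `x`. -/
def gramSet (q ℓ n : ℕ) (x : ℕ → Fin q) : Set (Fin ℓ → Fin q) :=
  {g | ∃ j : ℕ, j + ℓ ≤ n ∧ ∀ k : Fin ℓ, x (j + k.val) = g k}

/-- The ℓ-gram profile vector of the length-`n` word `x`. -/
def profileN (q ℓ n : ℕ) (x : ℕ → Fin q) : (Fin ℓ → Fin q) → ℕ :=
  fun z => ((Finset.range (n + 1 - ℓ)).filter
    (fun j => ∀ k : Fin ℓ, x (j + k.val) = z k)).card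

lemma gram_loc (q a ℓ M : ℕ) (ha : 1 ≤ a) (hℓ : 2 * a ≤ ℓ)
    (u : Fin M → (Fin a → Fin q)) (hu : Function.Injective u)
    (w y : ℕ → Fin q) (hw : Addressable q a ℓ M u w) (hy : Addressable q a ℓ M u y)
    (i : Fin M) (j : ℕ) (hj : j + ℓ ≤ M * ℓ)
    (hmatch : ∀ k : Fin ℓ, y (j + k.val) = w (i.val * ℓ + k.val)) :
    j = i.val * ℓ := by
  have hℓpos : 0 < ℓ := by omega
  have haℓ : a ≤ ℓ := by omega
  have hdm : (j / ℓ) * ℓ + j % ℓ = j := by rw [Nat.mul_comm]; exact Nat.div_add_mod j ℓ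
  have hrlt : j % ℓ < ℓ := Nat.mod_lt _ hℓpos
  set m := j / ℓ with hm
  set r := j % ℓ with hr
  have hmM : m < M := by
    have : j < M * ℓ := by omega
    exact (Nat.div_lt_iff_lt_mul hℓpos).mpr this
  rcases Nat.eq_zero_or_pos r with hr0 | hr1
  · -- gram starts at a block boundary: addresses force m = i
    have hji : j = m * ℓ := by omega
    have hui : u ⟨m, hmM⟩ = u i := by
      funext k
      have h1 := hy.1 ⟨m, hmM⟩ k
      have h2 := hw.1 i k
      have h3 := hmatch ⟨k.val, lt_of_lt_of_le k.isLt haℓ⟩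
      simp only [hji] at h1 h3 ⊢
      rw [← h1, h3, h2]
    have hmi : m = i.val := congrArg Fin.val (hu hui)
    rw [← hmi]
    omega
  rcases le_or_gt (r + a) ℓ with hra | hra
  · -- address u i occurs inside block m of y: contradiction with (C2)
    refine absurd ?_ (hy.2 ⟨m, hmM⟩ r hr1 hra i)
    intro k
    have h3 := hmatch ⟨k.val, lt_of_lt_of_le k.isLt haℓ⟩
    have h2 := hw.1 i k
    have e : m * ℓ + r + k.val = j + k.val := by omega
    rw [e]
    simpa [h2] using h3
  · -- gram straddles a boundary: address u (m+1) occurs inside block i of w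
    have hm1 : m + 1 < M := by
      have : (m + 1) * ℓ < M * ℓ := by nlinarith
      exact lt_of_mul_lt_mul_right this (le_of_lt hℓpos)
    set d := ℓ - r with hd
    have hd1 : 1 ≤ d := by omega
    have hda : d + a ≤ ℓ := by omega
    refine absurd ?_ (hw.2 i d hd1 hda ⟨m + 1, hm1⟩)
    intro k
    have hk : d + k.val < ℓ := by omega
    have h3 := hmatch ⟨d + k.val, hk⟩
    have h1 := hy.1 ⟨m + 1, hm1⟩ k
    have e1 : j + (d + k.val) = (m + 1) * ℓ + k.val := by
      have h4 : (m + 1) * ℓ = m * ℓ + ℓ := by ring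
      omega
    have e2 : i.val * ℓ + d + k.val = i.val * ℓ + (d + k.val) := by omega
    rw [e2, ← h3, e1]
    simpa using h1

/-- Distinct `(A,ℓ)`-addressable words (for distinct addresses, `2a ≤ ℓ`) have
different sets of ℓ-grams, and in particular different ℓ-gram profile vectors. -/
theorem stmt_8 (q a ℓ M : ℕ) (ha : 1 ≤ a) (hℓ : 2 * a ≤ ℓ)
    (u : Fin M → (Fin a → Fin q)) (hu : Function.Injective u)
    (x x' : ℕ → Fin q)
    (hx : Addressable q a ℓ M u x) (hx' : Addressable q a ℓ M u x')
    (hne : ∃ i : ℕ, i < M * ℓ ∧ x i ≠ x' i) :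
    gramSet q ℓ (M * ℓ) x ≠ gramSet q ℓ (M * ℓ) x' ∧
    profileN q ℓ (M * ℓ) x ≠ profileN q ℓ (M * ℓ) x' := by
  have hℓpos : 0 < ℓ := by omega
  obtain ⟨p, hpM, hp⟩ := hne
  have hdm : (p / ℓ) * ℓ + p % ℓ = p := by rw [Nat.mul_comm]; exact Nat.div_add_mod p ℓ
  have hrlt : p % ℓ < ℓ := Nat.mod_lt _ hℓpos
  have hiM : p / ℓ < M := (Nat.div_lt_iff_lt_mul hℓpos).mpr hpM
  set i : Fin M := ⟨p / ℓ, hiM⟩ with hi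
  -- the block z_i of x, as an ℓ-gram
  set g : Fin ℓ → Fin q := fun k => x (i.val * ℓ + k.val) with hg
  have hjℓ : i.val * ℓ + ℓ ≤ M * ℓ := by
    have : i.val + 1 ≤ M := hiM
    nlinarith
  -- g is an ℓ-gram of x
  have hgx : g ∈ gramSet q ℓ (M * ℓ) x := ⟨i.val * ℓ, hjℓ, fun k => rfl⟩
  -- but g is not an ℓ-gram of x'
  have hgx' : ∀ j : ℕ, j + ℓ ≤ M * ℓ → (∀ k : Fin ℓ, x' (j + k.val) = g k) → False := by
    intro j hjle hmatch
    have hj := gram_loc q a ℓ M ha hℓ u hu x x' hx hx' i j hjle hmatch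
    subst hj
    have := hmatch ⟨p % ℓ, hrlt⟩
    simp only [hg] at this
    have e : i.val * ℓ + p % ℓ = p := by
      show p / ℓ * ℓ + p % ℓ = p
      exact hdm
    rw [e] at this
    exact hp this.symm
  constructor
  · intro h
    rw [h] at hgx
    obtain ⟨j, hjle, hm⟩ := hgx
    exact hgx' j hjle hm
  · intro h
    have h1 : 1 ≤ profileN q ℓ (M * ℓ) x g := by
      rw [Nat.one_le_iff_ne_zero, ← Nat.pos_iff_ne_zero, profileN, Finset.card_pos]
      refine ⟨i.val * ℓ, Finset.mem_filter.mpr ⟨Finset.mem_range.mpr (by omega), ?_⟩⟩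
      intro k; rfl
    have h0 : profileN q ℓ (M * ℓ) x' g = 0 := by
      rw [profileN, Finset.card_eq_zero, Finset.filter_eq_empty_iff]
      intro j hjmem hm
      have hjle : j + ℓ ≤ M * ℓ := by
        have := Finset.mem_range.mp hjmem; omega
      exact hgx' j hjle hm
    rw [h, h0] at h1
    omega
end

section
/- Let A = {u_1,...,u_M} be a set of addresses of length a with 2a ≤ ℓ, and let x = z_1⋯z_M be an (A,ℓ)-addressable word. Let r be a Type I read of x, i.e., an ℓ-gram of x whose largest index t with r[t..t+a−1] ∈ A satisfies t ≤ ℓ−2a+2, and suppose r[t..t+a−1] = u_i. Then the unique index j with x[j..j+ℓ−1] = r is j = (i−1)ℓ − t + 2. -/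
/-- Alignment lemma: let `r` be a Type I read of the `(A,ℓ)`-addressable word `x`,
i.e. the largest (0-indexed) position `t` with `r[t..t+a−1] ∈ A` satisfies
`t ≤ ℓ − 2a + 1` (0-indexed), and suppose `r[t..t+a−1] = u i`. Then the unique
position at which `r` occurs in `x` is `j = iℓ − t` (0-indexed version of
`(i−1)ℓ − t + 2`). -/
theorem stmt_12 (q a ℓ M : ℕ) (ha : 1 ≤ a) (hℓ : 2 * a ≤ ℓ)
    (u : Fin M → (Fin a → Fin q)) (hu : Function.Injective u)
    (x : ℕ → Fin q) (hx : Addressable q a ℓ M u x)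
    (r : Fin ℓ → Fin q)
    (hocc : ∃ j : ℕ, j + ℓ ≤ M * ℓ ∧ ∀ k : Fin ℓ, x (j + k.val) = r k)
    (t : ℕ) (i : Fin M) (hta : t + a ≤ ℓ)
    (hwin : ∀ k : Fin a, ∀ h : t + k.val < ℓ, r ⟨t + k.val, h⟩ = u i k)
    (hmax : ∀ t' : ℕ, t < t' → t' + a ≤ ℓ → ∀ m : Fin M,
      ¬ (∀ k : Fin a, ∀ h : t' + k.val < ℓ, r ⟨t' + k.val, h⟩ = u m k))
    (htypeI : t + 2 * a ≤ ℓ + 1) :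
    ∀ j : ℕ, j + ℓ ≤ M * ℓ → (∀ k : Fin ℓ, x (j + k.val) = r k) →
      j = i.val * ℓ - t := by
  obtain ⟨hx1, hx2⟩ := hx
  intro j hj hr
  have hℓpos : 0 < ℓ := by omega
  set p := j + t with hp
  set c := p / ℓ with hc
  set s := p % ℓ with hs
  have hdm : c * ℓ + s = p := Nat.div_add_mod' p ℓ
  have hslt : s < ℓ := Nat.mod_lt p hℓpos
  -- helper: r at window position t+k equals x at j+t+k
  have hrx : ∀ k : Fin a, x (p + k.val) = u i k := by
    intro k
    have hk : t + k.val < ℓ := by omega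
    have := hr ⟨t + k.val, hk⟩
    simp only at this
    rw [show p + k.val = j + (t + k.val) by omega, this]
    exact hwin k hk
  rcases Nat.lt_or_ge s 1 with hs0 | hs1
  · -- s = 0 : aligned case
    have hceq : c * ℓ = p := by omega
    have hcM : c < M := by
      by_contra hMc
      have : M * ℓ ≤ c * ℓ := Nat.mul_le_mul_right ℓ (by omega)
      omega
    have hue : u ⟨c, hcM⟩ = u i := by
      funext k
      have h1 := hx1 ⟨c, hcM⟩ k
      simp only at h1
      rw [← h1, show c * ℓ + k.val = p + k.val by omega]
      exact hrx k
    have hci : c = i.val := by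
      have := hu hue
      exact congrArg Fin.val this
    have : i.val * ℓ = j + t := by rw [← hci]; omega
    omega
  rcases Nat.lt_or_ge (s + a) (ℓ + 1) with hsa | hsa
  · -- address strictly inside block c : contradiction with addressability
    have hcM : c < M := by
      by_contra hMc
      have : M * ℓ ≤ c * ℓ := Nat.mul_le_mul_right ℓ (by omega)
      omega
    exact absurd (fun k => by
      rw [show (⟨c, hcM⟩ : Fin M).val * ℓ + s + k.val = p + k.val by
        simp only [Fin.val_mk]; omega]
      exact hrx k) (hx2 ⟨c, hcM⟩ s hs1 (by omega) i)
  · -- address crosses into block c+1 : contradiction with maximality of t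
    have hd : 1 ≤ ℓ - s ∧ ℓ - s ≤ a - 1 := by omega
    set t' := t + (ℓ - s) with ht'
    have ht'a : t' + a ≤ ℓ := by omega
    have hml : (c + 1) * ℓ = c * ℓ + ℓ := by ring
    have hjt' : j + t' = (c + 1) * ℓ := by omega
    have hcM : c + 1 < M := by
      by_contra hMc
      have : M * ℓ ≤ (c + 1) * ℓ := Nat.mul_le_mul_right ℓ (by omega)
      omega
    refine absurd (fun k h => ?_) (hmax t' (by omega) ht'a ⟨c + 1, hcM⟩)
    have := hr ⟨t' + k.val, h⟩
    simp only at this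
    rw [← this]
    have h1 := hx1 ⟨c + 1, hcM⟩ k
    simp only at h1
    rw [show j + (t' + k.val) = (c + 1) * ℓ + k.val by omega]
    exact h1
end

section
/- Let x = z_1⋯z_M be an (A,ℓ)-addressable word of length n = Mℓ with 2a ≤ ℓ. For 1 ≤ j ≤ n−ℓ+1, the ℓ-gram x[j..j+ℓ−1] is a Type I read if and only if j mod ℓ ∉ {2,3,...,2a−1}. -/
/-- The read `x[j..j+ℓ−1]` (0-indexed `j`) of an `(A,ℓ)`-addressable word `x` is a
Type I read (the largest `t` with an address at `t` satisfies `t ≤ ℓ − 2a + 1`,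
0-indexed) if and only if `j mod ℓ ∉ {1,…,2a−2}` (0-indexed version of
`j mod ℓ ∉ {2,…,2a−1}`). -/
theorem stmt_13 (q a ℓ M : ℕ) (ha : 1 ≤ a) (hℓ : 2 * a ≤ ℓ)
    (u : Fin M → (Fin a → Fin q)) (hu : Function.Injective u)
    (x : ℕ → Fin q) (hx : Addressable q a ℓ M u x)
    (j : ℕ) (hj : j + ℓ ≤ M * ℓ) :
    (∃ t : ℕ, t + a ≤ ℓ ∧ t + 2 * a ≤ ℓ + 1 ∧
      (∃ m : Fin M, ∀ k : Fin a, x (j + t + k.val) = u m k) ∧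
      (∀ t' : ℕ, t < t' → t' + a ≤ ℓ → ∀ m : Fin M,
        ¬ (∀ k : Fin a, x (j + t' + k.val) = u m k))) ↔
    ¬ (1 ≤ j % ℓ ∧ j % ℓ + 2 ≤ 2 * a) := by
  have hℓpos : 0 < ℓ := by omega
  have haddr : ∀ i : ℕ, (hi : i < M) → ∀ k : Fin a, x (i * ℓ + k.val) = u ⟨i, hi⟩ k :=
    fun i hi k => hx.1 ⟨i, hi⟩ k
  have hno : ∀ (i j' : ℕ), i < M → 1 ≤ j' → j' + a ≤ ℓ → ∀ m : Fin M,
      ¬ (∀ k : Fin a, x (i * ℓ + j' + k.val) = u m k) :=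
    fun i j' hi h1 h2 m => hx.2 ⟨i, hi⟩ j' h1 h2 m
  have hiM : ∀ i : ℕ, i * ℓ < M * ℓ → i < M :=
    fun i h => lt_of_mul_lt_mul_right h (Nat.zero_le ℓ)
  have hq := Nat.div_add_mod j ℓ
  set D := j / ℓ with hD
  set r := j % ℓ with hr
  have hrlt : r < ℓ := Nat.mod_lt _ hℓpos
  obtain ⟨e, he⟩ : ∃ e, e = D * ℓ := ⟨_, rfl⟩
  obtain ⟨n, hn⟩ : ∃ n, n = M * ℓ := ⟨_, rfl⟩
  have he1 : (D + 1) * ℓ = e + ℓ := by rw [he]; ring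
  have hej : e + r = j := by rw [he, Nat.mul_comm]; exact hq
  have hjn : j + ℓ ≤ n := by rw [hn]; exact hj
  constructor
  · rintro ⟨t, hta, ht2a, ⟨m, hm⟩, hmax⟩ ⟨hr1, hr2⟩
    by_cases hra : r < a
    · -- the witness position itself lies in the forbidden interior zone
      refine hno D (r + t) (hiM D (by rw [← he, ← hn]; omega)) (by omega) (by omega) m ?_
      intro k
      rw [show D * ℓ + (r + t) + k.val = j + t + k.val by rw [← he]; omega]
      exact hm k
    · -- there is an address at ℓ - r > t, contradicting maximality
      have hi1 : D + 1 < M := hiM (D + 1) (by rw [he1, ← hn]; omega)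
      refine hmax (ℓ - r) (by omega) (by omega) ⟨D + 1, hi1⟩ ?_
      intro k
      rw [show j + (ℓ - r) + k.val = (D + 1) * ℓ + k.val by rw [he1]; omega]
      exact haddr (D + 1) hi1 k
  · intro hrhs
    by_cases hr0 : r = 0
    · have hDM : D < M := hiM D (by rw [← he, ← hn]; omega)
      refine ⟨0, by omega, by omega, ⟨⟨D, hDM⟩, ?_⟩, ?_⟩
      · intro k
        rw [show j + 0 + k.val = D * ℓ + k.val by rw [← he]; omega]
        exact haddr D hDM k
      · intro t' ht' hta' m hm
        refine hno D t' hDM (by omega) (by omega) m ?_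
        intro k
        rw [show D * ℓ + t' + k.val = j + t' + k.val by rw [← he]; omega]
        exact hm k
    · have hr2a : 2 * a ≤ r + 1 := by omega
      have hi1 : D + 1 < M := hiM (D + 1) (by rw [he1, ← hn]; omega)
      refine ⟨ℓ - r, by omega, by omega, ⟨⟨D + 1, hi1⟩, ?_⟩, ?_⟩
      · intro k
        rw [show j + (ℓ - r) + k.val = (D + 1) * ℓ + k.val by rw [he1]; omega]
        exact haddr (D + 1) hi1 k
      · intro t' ht' hta' m hm
        refine hno (D + 1) (t' - (ℓ - r)) hi1 (by omega) (by omega) m ?_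
        intro k
        rw [show (D + 1) * ℓ + (t' - (ℓ - r)) + k.val = j + t' + k.val by rw [he1]; omega]
        exact hm k
end

section
/- Let x be an (A,ℓ)-addressable word of length n = Mℓ with 2a ≤ ℓ. Every symbol x[i] with ℓ ≤ i ≤ n−ℓ is covered by exactly ℓ−2a+2 Type I reads, and every symbol of x is covered by at least one Type I read. -/
attribute [local instance] Classical.propDecidable

/-- The read of `x` starting at (0-indexed) position `j` is a Type I read:
the largest `t` with an address occurring in the read at position `t`
satisfies `t ≤ ℓ − 2a + 1` (0-indexed). -/
def TypeIAt (q a ℓ M : ℕ) (u : Fin M → (Fin a → Fin q)) (x : ℕ → Fin q) (j : ℕ) : Prop :=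
  ∃ t : ℕ, t + a ≤ ℓ ∧ t + 2 * a ≤ ℓ + 1 ∧
    (∃ m : Fin M, ∀ k : Fin a, x (j + t + k.val) = u m k) ∧
    (∀ t' : ℕ, t < t' → t' + a ≤ ℓ → ∀ m : Fin M,
      ¬ (∀ k : Fin a, x (j + t' + k.val) = u m k))

/-- An address occurs at every position `p` that is a multiple of `ℓ` (within range). -/
lemma aux_occ (q a ℓ M : ℕ) (u : Fin M → (Fin a → Fin q)) (x : ℕ → Fin q)
    (hx : Addressable q a ℓ M u x) (hℓpos : 0 < ℓ) (p : ℕ)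
    (hp0 : p % ℓ = 0) (hp : p < M * ℓ) :
    ∃ m : Fin M, ∀ k : Fin a, x (p + k.val) = u m k := by
  have hlt : p / ℓ < M := (Nat.div_lt_iff_lt_mul hℓpos).mpr hp
  refine ⟨⟨p / ℓ, hlt⟩, fun k => ?_⟩
  have h1 := hx.1 ⟨p / ℓ, hlt⟩ k
  have h2 : p / ℓ * ℓ = p := Nat.div_mul_cancel (Nat.dvd_of_mod_eq_zero hp0)
  simpa [h2] using h1

/-- No address occurs at a position `p` with `1 ≤ p % ℓ` and `p % ℓ + a ≤ ℓ`. -/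
lemma aux_no_occ (q a ℓ M : ℕ) (u : Fin M → (Fin a → Fin q)) (x : ℕ → Fin q)
    (hx : Addressable q a ℓ M u x) (hℓpos : 0 < ℓ) (p : ℕ)
    (h1 : 1 ≤ p % ℓ) (h2 : p % ℓ + a ≤ ℓ) (hp : p < M * ℓ) (m : Fin M) :
    ¬ (∀ k : Fin a, x (p + k.val) = u m k) := by
  have hlt : p / ℓ < M := (Nat.div_lt_iff_lt_mul hℓpos).mpr hp
  have h3 := hx.2 ⟨p / ℓ, hlt⟩ (p % ℓ) h1 h2 m
  have h4 : p / ℓ * ℓ + p % ℓ = p := Nat.div_add_mod' p ℓ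
  simpa [h4] using h3

/-- Characterization: a read starting at `j` is Type I iff `j % ℓ = 0` or `j % ℓ ≥ 2a−1`. -/
lemma typeI_iff (q a ℓ M : ℕ) (ha : 1 ≤ a) (hℓ : 2 * a ≤ ℓ)
    (u : Fin M → (Fin a → Fin q)) (x : ℕ → Fin q) (hx : Addressable q a ℓ M u x)
    (j : ℕ) (hj : j + ℓ ≤ M * ℓ) :
    TypeIAt q a ℓ M u x j ↔ (j % ℓ = 0 ∨ 2 * a - 1 ≤ j % ℓ) := by
  have hℓpos : 0 < ℓ := by omega
  have hd : ℓ * (j / ℓ) + j % ℓ = j := Nat.div_add_mod j ℓ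
  have hr : j % ℓ < ℓ := Nat.mod_lt _ hℓpos
  have hblock : j + (ℓ - j % ℓ) = ℓ * (j / ℓ + 1) := by
    rw [Nat.mul_add, Nat.mul_one]; omega
  constructor
  · rintro ⟨t, hta, ht2a, ⟨m, hm⟩, hmax⟩
    by_contra hcon
    push_neg at hcon
    obtain ⟨hr0, hr1⟩ := hcon
    by_cases hcase : j % ℓ ≤ a - 1
    · -- residue of j + t is in [1, ℓ - a] : forbidden, contradicting the occurrence
      have hs : (j + t) % ℓ = j % ℓ + t := by
        have he : j + t = ℓ * (j / ℓ) + (j % ℓ + t) := by omega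
        rw [he, Nat.mul_add_mod]
        exact Nat.mod_eq_of_lt (by omega)
      exact aux_no_occ q a ℓ M u x hx hℓpos (j + t) (by omega) (by omega) (by omega) m hm
    · -- a ≤ j % ℓ ≤ 2a − 2 : an address occurs at offset ℓ − j % ℓ > t
      have h0 : (j + (ℓ - j % ℓ)) % ℓ = 0 := by rw [hblock, Nat.mul_mod_right]
      obtain ⟨m', hm'⟩ := aux_occ q a ℓ M u x hx hℓpos (j + (ℓ - j % ℓ)) h0 (by omega)
      exact hmax (ℓ - j % ℓ) (by omega) (by omega) m' hm'
  · intro h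
    rcases h with h0 | h1
    · refine ⟨0, by omega, by omega, ?_, ?_⟩
      · obtain ⟨m, hm⟩ := aux_occ q a ℓ M u x hx hℓpos j h0 (by omega)
        exact ⟨m, fun k => by simpa using hm k⟩
      · intro t' ht' hta m
        have hs : (j + t') % ℓ = t' := by
          have he : j + t' = ℓ * (j / ℓ) + t' := by omega
          rw [he, Nat.mul_add_mod]
          exact Nat.mod_eq_of_lt (by omega)
        exact aux_no_occ q a ℓ M u x hx hℓpos (j + t') (by omega) (by omega) (by omega) m
    · -- j % ℓ ≥ 2a − 1 : take t = ℓ − j % ℓ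
      have h0 : (j + (ℓ - j % ℓ)) % ℓ = 0 := by rw [hblock, Nat.mul_mod_right]
      refine ⟨ℓ - j % ℓ, by omega, by omega, ?_, ?_⟩
      · exact aux_occ q a ℓ M u x hx hℓpos (j + (ℓ - j % ℓ)) h0 (by omega)
      · intro t' ht' hta m
        have hs : (j + t') % ℓ = j % ℓ + t' - ℓ := by
          have he : j + t' = ℓ * (j / ℓ + 1) + (j % ℓ + t' - ℓ) := by
            rw [Nat.mul_add, Nat.mul_one]; omega
          rw [he, Nat.mul_add_mod]
          exact Nat.mod_eq_of_lt (by omega)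
        exact aux_no_occ q a ℓ M u x hx hℓpos (j + t') (by omega) (by omega) (by omega) m

/-- Two numbers in a window of length `ℓ` with the same residue mod `ℓ` are equal. -/
lemma window_inj (ℓ : ℕ) (j1 j2 i : ℕ)
    (h1a : j1 ≤ i) (h1b : i < j1 + ℓ) (h2a : j2 ≤ i) (h2b : i < j2 + ℓ)
    (heq : j1 % ℓ = j2 % ℓ) : j1 = j2 := by
  have hd1 : ℓ * (j1 / ℓ) + j1 % ℓ = j1 := Nat.div_add_mod j1 ℓ
  have hd2 : ℓ * (j2 / ℓ) + j2 % ℓ = j2 := Nat.div_add_mod j2 ℓ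
  have hdiv : j1 / ℓ = j2 / ℓ := by
    by_contra hne
    rcases Nat.lt_or_ge (j1 / ℓ) (j2 / ℓ) with h | h
    · have h' : ℓ * (j1 / ℓ + 1) ≤ ℓ * (j2 / ℓ) := Nat.mul_le_mul_left ℓ h
      rw [Nat.mul_add, Nat.mul_one] at h'
      omega
    · have h'' : j2 / ℓ < j1 / ℓ := by omega
      have h' : ℓ * (j2 / ℓ + 1) ≤ ℓ * (j1 / ℓ) := Nat.mul_le_mul_left ℓ h''
      rw [Nat.mul_add, Nat.mul_one] at h'
      omega
  rw [← hd1, ← hd2, hdiv, heq]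

/-- In an `(A,ℓ)`-addressable word of length `n = Mℓ` with `2a ≤ ℓ`: every symbol
`x[i]` with `ℓ − 1 ≤ i ≤ n − ℓ − 1` (0-indexed version of `ℓ ≤ i ≤ n − ℓ`) is
covered by exactly `ℓ − 2a + 2` Type I reads, and every symbol is covered by at
least one Type I read. -/
theorem stmt_14 (q a ℓ M : ℕ) (ha : 1 ≤ a) (hℓ : 2 * a ≤ ℓ) (hM : 1 ≤ M)
    (u : Fin M → (Fin a → Fin q)) (hu : Function.Injective u)
    (x : ℕ → Fin q) (hx : Addressable q a ℓ M u x) :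
    (∀ i : ℕ, ℓ - 1 ≤ i → i + ℓ + 1 ≤ M * ℓ →
      ((Finset.range (M * ℓ + 1 - ℓ)).filter
        (fun j => j ≤ i ∧ i < j + ℓ ∧ TypeIAt q a ℓ M u x j)).card = ℓ - 2 * a + 2) ∧
    (∀ i : ℕ, i < M * ℓ →
      ∃ j : ℕ, j + ℓ ≤ M * ℓ ∧ j ≤ i ∧ i < j + ℓ ∧ TypeIAt q a ℓ M u x j) := by
  have hℓpos : 0 < ℓ := by omega
  constructor
  · intro i hi1 hi2
    have key : ((Finset.range (M * ℓ + 1 - ℓ)).filter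
        (fun j => j ≤ i ∧ i < j + ℓ ∧ TypeIAt q a ℓ M u x j)).card
        = ((Finset.range ℓ).filter (fun r => r = 0 ∨ 2 * a - 1 ≤ r)).card := by
      apply Finset.card_bij (fun j _ => j % ℓ)
      · intro j hjmem
        simp only [Finset.mem_filter, Finset.mem_range] at hjmem ⊢
        obtain ⟨hj1, hj2, hj3, hj4⟩ := hjmem
        exact ⟨Nat.mod_lt _ hℓpos,
          (typeI_iff q a ℓ M ha hℓ u x hx j (by omega)).mp hj4⟩
      · intro j1 h1 j2 h2 heq
        simp only [Finset.mem_filter, Finset.mem_range] at h1 h2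
        exact window_inj ℓ j1 j2 i h1.2.1 h1.2.2.1 h2.2.1 h2.2.2.1 heq
      · intro r hrmem
        simp only [Finset.mem_filter, Finset.mem_range] at hrmem
        obtain ⟨hrℓ, hrg⟩ := hrmem
        have hrle : r ≤ i := by omega
        have hmod : ℓ * ((i - r) / ℓ) + (i - r) % ℓ = i - r := Nat.div_add_mod (i - r) ℓ
        have hmlt : (i - r) % ℓ < ℓ := Nat.mod_lt _ hℓpos
        have hJr : (r + ℓ * ((i - r) / ℓ)) % ℓ = r := by
          rw [Nat.add_mul_mod_self_left]
          exact Nat.mod_eq_of_lt hrℓ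
        have hJle : r + ℓ * ((i - r) / ℓ) ≤ i := by omega
        have hJlt : i < r + ℓ * ((i - r) / ℓ) + ℓ := by omega
        refine ⟨r + ℓ * ((i - r) / ℓ), ?_, hJr⟩
        simp only [Finset.mem_filter, Finset.mem_range]
        refine ⟨by omega, hJle, hJlt, ?_⟩
        apply (typeI_iff q a ℓ M ha hℓ u x hx _ (by omega)).mpr
        rw [hJr]
        exact hrg
    rw [key]
    have hset : (Finset.range ℓ).filter (fun r => r = 0 ∨ 2 * a - 1 ≤ r)
        = insert 0 (Finset.Ico (2 * a - 1) ℓ) := by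
      ext r
      simp only [Finset.mem_filter, Finset.mem_range, Finset.mem_insert, Finset.mem_Ico]
      omega
    rw [hset, Finset.card_insert_of_notMem (by simp only [Finset.mem_Ico]; omega),
      Nat.card_Ico]
    omega
  · intro i hi
    have hdiv : i / ℓ < M := (Nat.div_lt_iff_lt_mul hℓpos).mpr hi
    have hd : ℓ * (i / ℓ) + i % ℓ = i := Nat.div_add_mod i ℓ
    have hmlt : i % ℓ < ℓ := Nat.mod_lt _ hℓpos
    have hub : ℓ * (i / ℓ) + ℓ ≤ M * ℓ := by
      have h' : ℓ * (i / ℓ + 1) ≤ ℓ * M := Nat.mul_le_mul_left ℓ hdiv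
      rw [Nat.mul_add, Nat.mul_one, Nat.mul_comm ℓ M] at h'
      omega
    refine ⟨ℓ * (i / ℓ), hub, by omega, by omega, ?_⟩
    apply (typeI_iff q a ℓ M ha hℓ u x hx _ hub).mpr
    left
    exact Nat.mul_mod_right ℓ (i / ℓ)
end

section
/- Let x be a q-ary word of length n in which every (ℓ−1)-gram appears at most once. If x' is a q-ary word with the same ℓ-gram profile vector as x, then x' = x. -/
attribute [local instance] Classical.propDecidable

/-- Ukkonen: if every `(ℓ−1)`-gram of `x` appears at most once, then `x` is
uniquely determined by its ℓ-gram profile vector. -/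
theorem stmt_15 (q n ℓ : ℕ) (hℓ : 1 ≤ ℓ) (hℓn : ℓ ≤ n)
    (x : Fin n → Fin q)
    (hx : ∀ z : Fin (ℓ - 1) → Fin q, profileVec q n (ℓ - 1) x z ≤ 1)
    (x' : Fin n → Fin q)
    (h : profileVec q n ℓ x' = profileVec q n ℓ x) :
    x' = x := by
  obtain ⟨m, rfl⟩ : ∃ m, ℓ = m + 1 := ⟨ℓ - 1, by omega⟩
  simp only [Nat.succ_sub_one] at hx
  have xcongr : ∀ (a b : ℕ) (ha : a < n) (hb : b < n), a = b → x ⟨a, ha⟩ = x ⟨b, hb⟩ := by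
    intro a b ha hb hab; subst hab; rfl
  have x'congr : ∀ (a b : ℕ) (ha : a < n) (hb : b < n), a = b → x' ⟨a, ha⟩ = x' ⟨b, hb⟩ := by
    intro a b ha hb hab; subst hab; rfl
  rcases Nat.eq_zero_or_pos m with rfl | hm
  · exfalso
    have h0 := hx (fun k => k.elim0)
    have h1 : profileVec q n 0 x (fun k => k.elim0) = n + 1 := by
      unfold profileVec
      rw [Finset.filter_true_of_mem (fun i _ => fun k => k.elim0)]
      simp
    omega
  -- uniqueness of m-grams in x
  have uniq : ∀ j1 j2 : ℕ, j1 ≤ n - m → j2 ≤ n - m →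
      (∀ k : ℕ, k < m → ∀ h1 : j1 + k < n, ∀ h2 : j2 + k < n,
        x ⟨j1 + k, h1⟩ = x ⟨j2 + k, h2⟩) → j1 = j2 := by
    intro j1 j2 hj1 hj2 hagree
    have hcard := hx (fun k => x ⟨j1 + k.val, by omega⟩)
    unfold profileVec at hcard
    have mem : ∀ j, j ≤ n - m →
        (∀ k : ℕ, k < m → ∀ h1 : j1 + k < n, ∀ h2 : j + k < n,
          x ⟨j1 + k, h1⟩ = x ⟨j + k, h2⟩) →
        j ∈ (Finset.range (n + 1 - m)).filter
          (fun i => ∀ k : Fin m, ∀ hk : i + k.val < n,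
            x ⟨i + k.val, hk⟩ = (fun k : Fin m => x ⟨j1 + k.val, by omega⟩) k) := by
      intro j hj hag
      rw [Finset.mem_filter, Finset.mem_range]
      refine ⟨by omega, fun k hk => ?_⟩
      exact (hag k.val k.2 (by omega) hk).symm
    have m1 := mem j1 hj1 (fun k hk h1 h2 => xcongr _ _ h1 h2 rfl)
    have m2 := mem j2 hj2 hagree
    exact Finset.card_le_one.mp hcard j1 m1 j2 m2
  -- every (m+1)-gram of x' appears in x
  have exists_match : ∀ i, i ≤ n - (m+1) → ∃ j, j ≤ n - (m+1) ∧
      ∀ k : ℕ, k < m + 1 → ∀ h1 : j + k < n, ∀ h2 : i + k < n,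
        x ⟨j + k, h1⟩ = x' ⟨i + k, h2⟩ := by
    intro i hi
    have hpos : 0 < profileVec q n (m+1) x' (fun k => x' ⟨i + k.val, by omega⟩) := by
      unfold profileVec
      rw [Finset.card_pos]
      refine ⟨i, ?_⟩
      rw [Finset.mem_filter, Finset.mem_range]
      exact ⟨by omega, fun k hk => x'congr _ _ hk (by omega) rfl⟩
    rw [h] at hpos
    unfold profileVec at hpos
    rw [Finset.card_pos] at hpos
    obtain ⟨j, hj⟩ := hpos
    rw [Finset.mem_filter, Finset.mem_range] at hj
    refine ⟨j, by omega, fun k hk h1 h2 => ?_⟩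
    have := hj.2 ⟨k, hk⟩ h1
    exact this.trans (x'congr _ _ (by omega) h2 rfl)
  choose f hf1 hf2 using exists_match
  -- f shifts by one
  have fstep : ∀ i (hi : i + 1 ≤ n - (m+1)) (hi' : i ≤ n - (m+1)),
      f (i+1) hi = f i hi' + 1 := by
    intro i hi hi'
    have hb1 := hf1 (i+1) hi
    have hb2 := hf1 i hi'
    apply uniq _ _ (by omega) (by omega)
    intro k hk h1 h2
    have e1 := hf2 (i+1) hi k (by omega) h1 (by omega : (i+1)+k < n)
    have e2 := hf2 i hi' (k+1) (by omega) (by omega : f i hi' + (k+1) < n)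
      (by omega : i+(k+1) < n)
    calc x ⟨f (i+1) hi + k, h1⟩ = x' ⟨(i+1)+k, by omega⟩ := e1
      _ = x' ⟨i+(k+1), by omega⟩ := x'congr _ _ _ _ (by omega)
      _ = x ⟨f i hi' + (k+1), by omega⟩ := e2.symm
      _ = x ⟨f i hi' + 1 + k, h2⟩ := xcongr _ _ _ _ (by omega)
  -- f is a translation
  have fid : ∀ i (hi : i ≤ n - (m+1)), f i hi = f 0 (Nat.zero_le _) + i := by
    intro i
    induction i with
    | zero => intro hi; simp
    | succ i ih =>
      intro hi
      rw [fstep i hi (by omega), ih (by omega)]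
      omega
  have h00 : f 0 (Nat.zero_le _) = 0 := by
    have hb := hf1 (n - (m+1)) le_rfl
    rw [fid (n - (m+1)) le_rfl] at hb
    omega
  have fall : ∀ i (hi : i ≤ n - (m+1)), f i hi = i := by
    intro i hi
    rw [fid i hi, h00]
    omega
  funext i
  by_cases hiN : i.val ≤ n - (m+1)
  · have hb := hf1 i.val hiN
    have e := hf2 i.val hiN 0 (by omega) (by omega) (by omega)
    have hfi := fall i.val hiN
    calc x' i = x' ⟨i.val + 0, by omega⟩ := x'congr _ _ _ _ (by omega)
      _ = x ⟨f i.val hiN + 0, by omega⟩ := e.symm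
      _ = x i := xcongr _ _ _ _ (by omega)
  · have hb := hf1 (n - (m+1)) le_rfl
    have hk : i.val - (n - (m+1)) < m + 1 := by omega
    have hfN := fall (n - (m+1)) le_rfl
    have e := hf2 (n - (m+1)) le_rfl (i.val - (n - (m+1))) hk (by omega) (by omega)
    calc x' i = x' ⟨(n - (m+1)) + (i.val - (n - (m+1))), by omega⟩ := x'congr _ _ _ _ (by omega)
      _ = x ⟨f (n - (m+1)) le_rfl + (i.val - (n - (m+1))), by omega⟩ := e.symm
      _ = x i := xcongr _ _ _ _ (by omega)
end

section
/- For q ≥ 2 and n ≥ 8, the following two inequalities hold: (i) if q^{ℓ−2} ≥ n², then C(n,2) q^{n−ℓ+1} < q^{n−1}/2; (ii) Σ_{d | n, d < n} μ(n/d) q^d < (n/2) q^{n/2} ≤ q^{n−1}/2. Consequently, if ℓ ≥ 2 log_q n + 2 and n ≥ 8, then P_q(n,ℓ) > q^{n−1}/n. -/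
attribute [local instance] Classical.propDecidable

def ext' (q n : ℕ) (hn : 0 < n) (x : Fin n → Fin q) (j : ℕ) : Fin q :=
  if h : j < n then x ⟨j, h⟩ else x ⟨0, hn⟩

def gram (q n ℓ : ℕ) (hn : 0 < n) (x : Fin n → Fin q) (i : ℕ) : Fin ℓ → Fin q :=
  fun k => ext' q n hn x (i + k.val)

def Good (q n ℓ : ℕ) (hn : 0 < n) (x : Fin n → Fin q) : Prop :=
  ∀ i j, i < n + 2 - ℓ → j < n + 2 - ℓ →
    (∀ t, t < ℓ - 1 → ext' q n hn x (i + t) = ext' q n hn x (j + t)) → i = j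

lemma ext'_eq (q n : ℕ) (hn : 0 < n) (x : Fin n → Fin q) (j : ℕ) (h : j < n) :
    ext' q n hn x j = x ⟨j, h⟩ := dif_pos h

lemma profile_eq (q n ℓ : ℕ) (hn : 0 < n) (hℓn : ℓ ≤ n) (x : Fin n → Fin q)
    (z : Fin ℓ → Fin q) :
    profileVec q n ℓ x z
      = ((Finset.range (n + 1 - ℓ)).filter (fun i => gram q n ℓ hn x i = z)).card := by
  unfold profileVec
  congr 1
  apply Finset.filter_congr
  intro i hi
  simp only [Finset.mem_range] at hi
  constructor
  · intro h
    funext k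
    have hk : i + k.val < n := by omega
    simp only [gram, ext'_eq q n hn x _ hk]
    exact h k hk
  · intro h k hk
    have := congrFun h k
    simp only [gram, ext'_eq q n hn x _ (by omega : i + k.val < n)] at this
    exact this

lemma good_inj (q n ℓ : ℕ) (hn : 0 < n) (hℓ2 : 2 ≤ ℓ) (hℓn : ℓ ≤ n)
    (x y : Fin n → Fin q) (hx : Good q n ℓ hn x)
    (hpf : profileVec q n ℓ x = profileVec q n ℓ y) : x = y := by
  -- every gram of y occurs as a gram of x
  have h1 : ∀ i, ∃ p, i < n + 1 - ℓ → p < n + 1 - ℓ ∧ gram q n ℓ hn x p = gram q n ℓ hn y i := by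
    intro i
    by_cases hi : i < n + 1 - ℓ
    · have hcy : 0 < profileVec q n ℓ y (gram q n ℓ hn y i) := by
        rw [profile_eq q n ℓ hn hℓn]
        apply Finset.card_pos.2
        exact ⟨i, Finset.mem_filter.2 ⟨Finset.mem_range.2 hi, rfl⟩⟩
      have hcx : 0 < profileVec q n ℓ x (gram q n ℓ hn y i) := by rw [hpf]; exact hcy
      rw [profile_eq q n ℓ hn hℓn] at hcx
      obtain ⟨p, hp⟩ := Finset.card_pos.1 hcx
      simp only [Finset.mem_filter, Finset.mem_range] at hp
      exact ⟨p, fun _ => hp⟩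
    · exact ⟨0, fun h => absurd h hi⟩
  set σ : ℕ → ℕ := fun i => (h1 i).choose with hσdef
  have hσ : ∀ i, i < n + 1 - ℓ → σ i < n + 1 - ℓ ∧ gram q n ℓ hn x (σ i) = gram q n ℓ hn y i :=
    fun i hi => (h1 i).choose_spec hi
  have hsucc : ∀ i, i + 1 < n + 1 - ℓ → σ (i + 1) = σ i + 1 := by
    intro i hi1
    have hi : i < n + 1 - ℓ := by omega
    obtain ⟨hb1, hg1⟩ := hσ i hi
    obtain ⟨hb2, hg2⟩ := hσ (i + 1) hi1
    have := hx (σ i + 1) (σ (i + 1)) (by omega) (by omega) ?_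
    · omega
    intro t ht
    have e1 : ext' q n hn x (σ i + 1 + t) = ext' q n hn y (i + 1 + t) := by
      have := congrFun hg1 ⟨t + 1, by omega⟩
      simpa only [gram, show σ i + (t + 1) = σ i + 1 + t by omega,
        show i + (t + 1) = i + 1 + t by omega] using this
    have e2 : ext' q n hn x (σ (i + 1) + t) = ext' q n hn y (i + 1 + t) := by
      have := congrFun hg2 ⟨t, by omega⟩
      simpa only [gram] using this
    rw [e1, e2]
  have hlin : ∀ i, i < n + 1 - ℓ → σ i = σ 0 + i := by
    intro i
    induction i with
    | zero => intro _; rfl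
    | succ m ih =>
      intro hm
      rw [hsucc m hm, ih (by omega)]; omega
  have hσ0 : σ 0 = 0 := by
    have h := (hσ (n - ℓ) (by omega)).1
    have := hlin (n - ℓ) (by omega)
    omega
  funext a
  have ha : a.val < n := a.isLt
  set i := min a.val (n - ℓ) with hidef
  have hi : i < n + 1 - ℓ := by omega
  have hk : a.val - i < ℓ := by omega
  obtain ⟨_, hg⟩ := hσ i hi
  rw [hlin i hi, hσ0] at hg
  have := congrFun hg ⟨a.val - i, hk⟩
  simp only [gram, Fin.val_mk, Nat.zero_add, show i + (a.val - i) = a.val by omega,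
    ext'_eq q n hn _ a.val ha] at this
  simpa using this

lemma card_S_le (q n ℓ : ℕ) (hn : 0 < n) (hℓ2 : 2 ≤ ℓ) (hℓn : ℓ ≤ n)
    (i j : ℕ) (hij : i < j) (hj : j < n + 2 - ℓ) :
    ((Finset.univ.filter (fun x : Fin n → Fin q =>
        ∀ t, t < ℓ - 1 → ext' q n hn x (i + t) = ext' q n hn x (j + t))).card)
      ≤ q ^ (n + 1 - ℓ) := by
  have hemb : ∀ m : Fin (n + 1 - ℓ), (if m.val < j then m.val else m.val + (ℓ - 1)) < n := by
    intro m
    have := m.isLt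
    split <;> omega
  have := Finset.card_le_card_of_injOn
    (s := (Finset.univ.filter (fun x : Fin n → Fin q =>
        ∀ t, t < ℓ - 1 → ext' q n hn x (i + t) = ext' q n hn x (j + t))))
    (t := (Finset.univ : Finset (Fin (n + 1 - ℓ) → Fin q)))
    (f := fun (x : Fin n → Fin q) (m : Fin (n + 1 - ℓ)) =>
      x ⟨if m.val < j then m.val else m.val + (ℓ - 1), hemb m⟩)
    (fun _ _ => Finset.mem_univ _) ?_
  · calc _ ≤ _ := this
    _ = q ^ (n + 1 - ℓ) := by simp [Finset.card_univ]
  intro x hx y hy hxy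
  simp only [Finset.mem_coe, Finset.mem_filter] at hx hy
  funext a
  obtain ⟨-, hx⟩ := hx
  obtain ⟨-, hy⟩ := hy
  have hxy' : ∀ m : Fin (n + 1 - ℓ),
      x ⟨if m.val < j then m.val else m.val + (ℓ - 1), hemb m⟩
        = y ⟨if m.val < j then m.val else m.val + (ℓ - 1), hemb m⟩ :=
    fun m => congrFun hxy m
  -- strong induction on the coordinate
  suffices H : ∀ v, ∀ h : v < n, x ⟨v, h⟩ = y ⟨v, h⟩ by
    have := H a.val a.isLt
    simpa using this
  intro v
  induction v using Nat.strong_induction_on with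
  | _ v IH =>
    intro hv
    rcases lt_or_ge v j with hvj | hvj
    · have hv' : v < n + 1 - ℓ := by omega
      have := hxy' ⟨v, hv'⟩
      simpa only [Fin.val_mk, if_pos hvj] using this
    rcases lt_or_ge v (j + (ℓ - 1)) with hvb | hvb
    · set t := v - j with ht
      have ht1 : t < ℓ - 1 := by omega
      have hjt : j + t = v := by omega
      have hitn : i + t < n := by omega
      have hxv := hx t ht1
      have hyv := hy t ht1
      rw [hjt, ext'_eq q n hn x v hv, ext'_eq q n hn x _ hitn] at hxv
      rw [hjt, ext'_eq q n hn y v hv, ext'_eq q n hn y _ hitn] at hyv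
      rw [← hxv, ← hyv]
      exact IH (i + t) (by omega) hitn
    · have hv' : v - (ℓ - 1) < n + 1 - ℓ := by omega
      have hthis := hxy' ⟨v - (ℓ - 1), hv'⟩
      have hge : ¬ (v - (ℓ - 1) < j) := by omega
      simp only [Fin.val_mk, if_neg hge] at hthis
      have he : v - (ℓ - 1) + (ℓ - 1) = v := by omega
      convert hthis using 3 <;> omega

lemma card_bad_le (q n ℓ : ℕ) (hn : 0 < n) (hℓ2 : 2 ≤ ℓ) (hℓn : ℓ ≤ n) :
    (Finset.univ.filter (fun x : Fin n → Fin q => ¬ Good q n ℓ hn x)).card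
      ≤ (n + 2 - ℓ) ^ 2 * q ^ (n + 1 - ℓ) := by
  set P := (Finset.range (n + 2 - ℓ) ×ˢ Finset.range (n + 2 - ℓ)).filter
    (fun p : ℕ × ℕ => p.1 < p.2) with hP
  have hsub : (Finset.univ.filter (fun x : Fin n → Fin q => ¬ Good q n ℓ hn x))
      ⊆ P.biUnion (fun p => Finset.univ.filter (fun x : Fin n → Fin q =>
          ∀ t, t < ℓ - 1 → ext' q n hn x (p.1 + t) = ext' q n hn x (p.2 + t))) := by
    intro x hx
    replace hx := (Finset.mem_filter.1 hx).2
    simp only [Good] at hx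
    push_neg at hx
    obtain ⟨i, j, hi, hj, hw, hij⟩ := hx
    rcases lt_or_gt_of_ne hij with h | h
    · refine Finset.mem_biUnion.2 ⟨(i, j), ?_, ?_⟩
      · simp [hP, Finset.mem_filter, Finset.mem_product, Finset.mem_range, hi, hj, h]
      · simp only [Finset.mem_filter, Finset.mem_univ, true_and]
        exact hw
    · refine Finset.mem_biUnion.2 ⟨(j, i), ?_, ?_⟩
      · simp [hP, Finset.mem_filter, Finset.mem_product, Finset.mem_range, hi, hj, h]
      · simp only [Finset.mem_filter, Finset.mem_univ, true_and]
        exact fun t ht => (hw t ht).symm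
  calc (Finset.univ.filter (fun x : Fin n → Fin q => ¬ Good q n ℓ hn x)).card
      ≤ _ := Finset.card_le_card hsub
    _ ≤ ∑ p ∈ P, (Finset.univ.filter (fun x : Fin n → Fin q =>
          ∀ t, t < ℓ - 1 → ext' q n hn x (p.1 + t) = ext' q n hn x (p.2 + t))).card :=
        Finset.card_biUnion_le
    _ ≤ ∑ _p ∈ P, q ^ (n + 1 - ℓ) := by
        apply Finset.sum_le_sum
        intro p hp
        simp only [hP, Finset.mem_filter, Finset.mem_product, Finset.mem_range] at hp
        exact card_S_le q n ℓ hn hℓ2 hℓn p.1 p.2 hp.2 hp.1.2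
    _ = P.card * q ^ (n + 1 - ℓ) := by rw [Finset.sum_const, smul_eq_mul]
    _ ≤ (n + 2 - ℓ) ^ 2 * q ^ (n + 1 - ℓ) := by
        apply Nat.mul_le_mul_right
        calc P.card ≤ ((Finset.range (n + 2 - ℓ)) ×ˢ (Finset.range (n + 2 - ℓ))).card :=
              Finset.card_filter_le _ _
          _ = (n + 2 - ℓ) ^ 2 := by simp [Finset.card_product, sq]

lemma numProfiles_lb (q n ℓ : ℕ) (hn : 0 < n) (hℓ2 : 2 ≤ ℓ) (hℓn : ℓ ≤ n) :
    q ^ n ≤ numProfiles q n ℓ + (n + 2 - ℓ) ^ 2 * q ^ (n + 1 - ℓ) := by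
  set G := Finset.univ.filter (fun x : Fin n → Fin q => Good q n ℓ hn x) with hG
  have hsplit : G.card + (Finset.univ.filter
      (fun x : Fin n → Fin q => ¬ Good q n ℓ hn x)).card = q ^ n := by
    rw [hG, Finset.card_filter_add_card_filter_not]
    simp [Finset.card_univ]
  have hGle : G.card ≤ numProfiles q n ℓ := by
    have himg : (G.image (profileVec q n ℓ)).card = G.card := by
      apply Finset.card_image_of_injOn
      intro x hx y _ hxy
      exact good_inj q n ℓ hn hℓ2 hℓn x y (by simpa [hG] using hx) hxy
    calc G.card = (G.image (profileVec q n ℓ)).card := himg.symm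
      _ ≤ numProfiles q n ℓ :=
          Finset.card_le_card (Finset.image_subset_image (Finset.subset_univ _))
  have := card_bad_le q n ℓ hn hℓ2 hℓn
  omega

lemma four_sq_le (n : ℕ) (hn : 8 ≤ n) : 4 * n ^ 2 ≤ 2 ^ n := by
  induction n with
  | zero => omega
  | succ m ih =>
    rcases Nat.lt_or_ge m 8 with h | h
    · interval_cases m <;> simp_all
    · have h1 := ih (by omega)
      have h2 : 4 * (m + 1) ^ 2 ≤ 2 * (4 * m ^ 2) := by nlinarith
      calc 4 * (m + 1) ^ 2 ≤ 2 * (4 * m ^ 2) := h2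
        _ ≤ 2 * 2 ^ m := by omega
        _ = 2 ^ (m + 1) := by ring

/-- For `q ≥ 2` and `n ≥ 8`:
(i) if `q^{ℓ−2} ≥ n²` then `C(n,2) q^{n−ℓ+1} < q^{n−1}/2`;
(ii) `Σ_{d ∣ n, d < n} μ(n/d) q^d < (n/2) q^{n/2} ≤ q^{n−1}/2`;
and consequently if `ℓ ≥ 2 log_q n + 2` then `P_q(n,ℓ) > q^{n−1}/n`. -/
theorem stmt_17 (q n ℓ : ℕ) (hq : 2 ≤ q) (hn : 8 ≤ n) (hℓ2 : 2 ≤ ℓ) (hℓn : ℓ ≤ n) :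
    (((n : ℝ) ^ 2 ≤ (q : ℝ) ^ (ℓ - 2) →
      (n.choose 2 : ℝ) * (q : ℝ) ^ (n - ℓ + 1) < (q : ℝ) ^ (n - 1) / 2)) ∧
    ((∑ d ∈ n.properDivisors, ((ArithmeticFunction.moebius (n / d) : ℤ) : ℝ) * (q : ℝ) ^ d
        < ((n : ℝ) / 2) * (q : ℝ) ^ ((n : ℝ) / 2)) ∧
      ((n : ℝ) / 2) * (q : ℝ) ^ ((n : ℝ) / 2) ≤ (q : ℝ) ^ (n - 1) / 2) ∧
    (2 * Real.logb q n + 2 ≤ (ℓ : ℝ) →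
      (q : ℝ) ^ (n - 1) / (n : ℝ) < (numProfiles q n ℓ : ℝ)) := by
  have hq1 : (1 : ℝ) ≤ (q : ℝ) := by exact_mod_cast Nat.one_le_of_lt hq
  have hq1' : (1 : ℝ) < (q : ℝ) := by exact_mod_cast hq
  have hq2 : (2 : ℝ) ≤ (q : ℝ) := by exact_mod_cast hq
  have hq0 : (0 : ℝ) < (q : ℝ) := by positivity
  have hn0 : (0 : ℝ) < (n : ℝ) := by positivity
  refine ⟨?_, ⟨?_, ?_⟩, ?_⟩
  · -- part (i)
    intro h
    have hA : (q : ℝ) ^ (ℓ - 2) * (q : ℝ) ^ (n - ℓ + 1) = (q : ℝ) ^ (n - 1) := by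
      rw [← pow_add]; congr 1; omega
    have hc2 : n.choose 2 * 2 = n * (n - 1) := by
      rw [Nat.choose_two_right]
      refine Nat.div_mul_cancel ?_
      have hev := Nat.even_mul_succ_self (n - 1)
      rw [show n - 1 + 1 = n by omega, Nat.mul_comm] at hev
      exact hev.two_dvd
    have hcl : (n.choose 2 : ℝ) * 2 < (n : ℝ) ^ 2 := by
      have h1 : n.choose 2 * 2 < n ^ 2 := by
        rw [hc2]; have : n * (n - 1) < n * n := mul_lt_mul_of_pos_left (by omega) (by omega)
        calc n * (n - 1) < n * n := this
          _ = n ^ 2 := (sq n).symm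
      exact_mod_cast h1
    have hp : (0 : ℝ) < (q : ℝ) ^ (n - ℓ + 1) := by positivity
    have hlt : (n.choose 2 : ℝ) < (q : ℝ) ^ (ℓ - 2) / 2 := by linarith
    calc (n.choose 2 : ℝ) * (q : ℝ) ^ (n - ℓ + 1)
        < ((q : ℝ) ^ (ℓ - 2) / 2) * (q : ℝ) ^ (n - ℓ + 1) :=
          mul_lt_mul_of_pos_right hlt hp
      _ = (q : ℝ) ^ (n - 1) / 2 := by rw [div_mul_eq_mul_div, hA]
  · -- part (ii) first: sum over proper divisors
    have h1mem : 1 ∈ n.properDivisors :=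
      Nat.one_mem_properDivisors_iff_one_lt.2 (by omega)
    have hle : ∀ d ∈ n.properDivisors,
        ((ArithmeticFunction.moebius (n / d) : ℤ) : ℝ) * (q : ℝ) ^ d
          ≤ (q : ℝ) ^ ((n : ℝ) / 2) := by
      intro d hd
      obtain ⟨hdvd, hdn⟩ := Nat.mem_properDivisors.1 hd
      have hd2 : 2 * d ≤ n := by
        obtain ⟨k, hk⟩ := hdvd
        rcases Nat.lt_or_ge k 2 with hk2 | hk2
        · interval_cases k <;> omega
        · nlinarith
      have hmu : ((ArithmeticFunction.moebius (n / d) : ℤ) : ℝ) ≤ 1 := by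
        have := ArithmeticFunction.abs_moebius_le_one (n := n / d)
        have h' : (ArithmeticFunction.moebius (n / d) : ℤ) ≤ 1 := le_of_abs_le this
        exact_mod_cast h'
      have hqd : (q : ℝ) ^ d ≤ (q : ℝ) ^ ((n : ℝ) / 2) := by
        rw [← Real.rpow_natCast (q : ℝ) d]
        apply Real.rpow_le_rpow_of_exponent_le hq1
        have : (d : ℝ) ≤ (n : ℝ) / 2 := by
          rw [le_div_iff₀ (by norm_num : (0:ℝ) < 2)]
          exact_mod_cast (by omega : d * 2 ≤ n)
        exact this
      have hqd0 : (0 : ℝ) ≤ (q : ℝ) ^ d := by positivity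
      calc ((ArithmeticFunction.moebius (n / d) : ℤ) : ℝ) * (q : ℝ) ^ d
          ≤ 1 * (q : ℝ) ^ d := mul_le_mul_of_nonneg_right hmu hqd0
        _ = (q : ℝ) ^ d := one_mul _
        _ ≤ (q : ℝ) ^ ((n : ℝ) / 2) := hqd
    have hlt1 : ((ArithmeticFunction.moebius (n / 1) : ℤ) : ℝ) * (q : ℝ) ^ 1
        < (q : ℝ) ^ ((n : ℝ) / 2) := by
      have hmu : ((ArithmeticFunction.moebius (n / 1) : ℤ) : ℝ) ≤ 1 := by
        have := ArithmeticFunction.abs_moebius_le_one (n := n / 1)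
        have h' : (ArithmeticFunction.moebius (n / 1) : ℤ) ≤ 1 := le_of_abs_le this
        exact_mod_cast h'
      have hql : (q : ℝ) ^ (1:ℕ) < (q : ℝ) ^ ((n : ℝ) / 2) := by
        rw [← Real.rpow_natCast (q : ℝ) 1]
        apply Real.rpow_lt_rpow_of_exponent_lt hq1'
        push_cast
        rw [lt_div_iff₀ (by norm_num : (0:ℝ) < 2)]
        have : (8 : ℝ) ≤ (n : ℝ) := by exact_mod_cast hn
        linarith
      have hq0' : (0 : ℝ) < (q : ℝ) ^ (1:ℕ) := by positivity
      calc ((ArithmeticFunction.moebius (n / 1) : ℤ) : ℝ) * (q : ℝ) ^ (1:ℕ)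
          ≤ 1 * (q : ℝ) ^ (1:ℕ) := mul_le_mul_of_nonneg_right hmu (le_of_lt hq0')
        _ = (q : ℝ) ^ (1:ℕ) := one_mul _
        _ < (q : ℝ) ^ ((n : ℝ) / 2) := hql
    have hsum : ∑ d ∈ n.properDivisors,
        ((ArithmeticFunction.moebius (n / d) : ℤ) : ℝ) * (q : ℝ) ^ d
        < ∑ _d ∈ n.properDivisors, (q : ℝ) ^ ((n : ℝ) / 2) :=
      Finset.sum_lt_sum hle ⟨1, h1mem, hlt1⟩
    have hcard : (n.properDivisors.card : ℝ) ≤ (n : ℝ) / 2 := by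
      have hsub : n.properDivisors ⊆ Finset.Icc 1 (n / 2) := by
        intro d hd
        obtain ⟨hdvd, hdn⟩ := Nat.mem_properDivisors.1 hd
        have hd1 : 1 ≤ d := Nat.pos_of_dvd_of_pos hdvd (by omega)
        have hd2 : 2 * d ≤ n := by
          obtain ⟨k, hk⟩ := hdvd
          rcases Nat.lt_or_ge k 2 with hk2 | hk2
          · interval_cases k <;> omega
          · nlinarith
        exact Finset.mem_Icc.2 ⟨hd1, by omega⟩
      have h1 : n.properDivisors.card ≤ n / 2 := by
        have := Finset.card_le_card hsub
        simpa using this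
      calc (n.properDivisors.card : ℝ) ≤ ((n / 2 : ℕ) : ℝ) := by exact_mod_cast h1
        _ ≤ (n : ℝ) / 2 := by
          have := Nat.cast_div_le (m := n) (n := 2) (α := ℝ)
          simpa using this
    have hqn2 : (0 : ℝ) ≤ (q : ℝ) ^ ((n : ℝ) / 2) := le_of_lt (Real.rpow_pos_of_pos hq0 _)
    calc ∑ d ∈ n.properDivisors,
          ((ArithmeticFunction.moebius (n / d) : ℤ) : ℝ) * (q : ℝ) ^ d
        < ∑ _d ∈ n.properDivisors, (q : ℝ) ^ ((n : ℝ) / 2) := hsum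
      _ = (n.properDivisors.card : ℝ) * (q : ℝ) ^ ((n : ℝ) / 2) := by
          rw [Finset.sum_const, nsmul_eq_mul]
      _ ≤ ((n : ℝ) / 2) * (q : ℝ) ^ ((n : ℝ) / 2) :=
          mul_le_mul_of_nonneg_right hcard hqn2
  · -- part (ii) second
    have hkey : (n : ℝ) ≤ (q : ℝ) ^ (((n : ℝ) - 2) / 2) := by
      have h4 : 4 * n ^ 2 ≤ 2 ^ n := four_sq_le n hn
      have hsq : n ^ 2 ≤ 2 ^ (n - 2) := by
        have h2 : 2 ^ n = 4 * 2 ^ (n - 2) := by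
          rw [show (4:ℕ) = 2 ^ 2 from rfl, ← pow_add]
          congr 1; omega
        omega
      have hsqR : ((n : ℝ)) ^ 2 ≤ (2 : ℝ) ^ ((n - 2 : ℕ)) := by exact_mod_cast hsq
      have hc : ((n : ℝ) - 2) = ((n - 2 : ℕ) : ℝ) := by
        push_cast [Nat.cast_sub (by omega : 2 ≤ n)]; ring
      have h2x : (n : ℝ) ≤ (2 : ℝ) ^ (((n : ℝ) - 2) / 2) := by
        rw [hc]
        have : (2 : ℝ) ^ ((((n - 2 : ℕ) : ℝ)) / 2)
            = Real.sqrt ((2 : ℝ) ^ ((n - 2 : ℕ))) := by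
          rw [Real.sqrt_eq_rpow, ← Real.rpow_natCast (2 : ℝ) (n - 2),
            ← Real.rpow_mul (by norm_num : (0:ℝ) ≤ 2)]
          congr 1; ring
        rw [this]
        have := Real.sqrt_le_sqrt hsqR
        rwa [Real.sqrt_sq (le_of_lt hn0)] at this
      calc (n : ℝ) ≤ (2 : ℝ) ^ (((n : ℝ) - 2) / 2) := h2x
        _ ≤ (q : ℝ) ^ (((n : ℝ) - 2) / 2) := by
          apply Real.rpow_le_rpow (by norm_num) hq2
          have : (8 : ℝ) ≤ (n : ℝ) := by exact_mod_cast hn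
          linarith
    have hsplit : (q : ℝ) ^ (((n : ℝ) - 2) / 2) * (q : ℝ) ^ ((n : ℝ) / 2)
        = (q : ℝ) ^ ((n : ℕ) - 1) := by
      rw [← Real.rpow_add hq0, ← Real.rpow_natCast (q : ℝ) (n - 1)]
      congr 1
      have : (((n : ℕ) - 1 : ℕ) : ℝ) = (n : ℝ) - 1 := by
        push_cast [Nat.cast_sub (by omega : 1 ≤ n)]; ring
      rw [this]; ring
    have hqn2 : (0 : ℝ) ≤ (q : ℝ) ^ ((n : ℝ) / 2) := le_of_lt (Real.rpow_pos_of_pos hq0 _)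
    calc ((n : ℝ) / 2) * (q : ℝ) ^ ((n : ℝ) / 2)
        ≤ ((q : ℝ) ^ (((n : ℝ) - 2) / 2) / 2) * (q : ℝ) ^ ((n : ℝ) / 2) := by
          apply mul_le_mul_of_nonneg_right _ hqn2
          linarith
      _ = (q : ℝ) ^ ((n : ℕ) - 1) / 2 := by
          rw [div_mul_eq_mul_div, hsplit]
  · -- part (iii)
    intro hL
    have hlogq : 0 < Real.log q := Real.log_pos hq1'
    have hn2 : (n : ℝ) ^ 2 ≤ (q : ℝ) ^ (ℓ - 2) := by
      have hlogn : 0 ≤ Real.log n := Real.log_nonneg (by exact_mod_cast Nat.one_le_of_lt hn)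
      have h1 : 2 * Real.log n / Real.log q ≤ (ℓ : ℝ) - 2 := by
        rw [Real.logb] at hL
        have : 2 * (Real.log n / Real.log q) = 2 * Real.log n / Real.log q := by ring
        linarith [hL, this]
      have h2 : 2 * Real.log n ≤ ((ℓ : ℝ) - 2) * Real.log q :=
        (div_le_iff₀ hlogq).1 h1
      have h3 : Real.log ((n : ℝ) ^ 2) ≤ Real.log ((q : ℝ) ^ (ℓ - 2)) := by
        rw [Real.log_pow, Real.log_pow]
        have : ((ℓ - 2 : ℕ) : ℝ) = (ℓ : ℝ) - 2 := by
          push_cast [Nat.cast_sub hℓ2]; ring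
        rw [this]
        push_cast
        linarith
      have hpos1 : (0 : ℝ) < (n : ℝ) ^ 2 := by positivity
      have hpos2 : (0 : ℝ) < (q : ℝ) ^ (ℓ - 2) := by positivity
      exact (Real.log_le_log_iff hpos1 hpos2).1 h3
    have hnat : q ^ n ≤ numProfiles q n ℓ + n ^ 2 * q ^ (n + 1 - ℓ) := by
      have h1 := numProfiles_lb q n ℓ (by omega) hℓ2 hℓn
      have h2 : (n + 2 - ℓ) ^ 2 ≤ n ^ 2 := Nat.pow_le_pow_left (by omega) 2
      have h3 : (n + 2 - ℓ) ^ 2 * q ^ (n + 1 - ℓ) ≤ n ^ 2 * q ^ (n + 1 - ℓ) :=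
        Nat.mul_le_mul_right _ h2
      omega
    have hreal : (q : ℝ) ^ n ≤ (numProfiles q n ℓ : ℝ) + (n : ℝ) ^ 2 * (q : ℝ) ^ (n + 1 - ℓ) := by
      exact_mod_cast hnat
    have hB : (n : ℝ) ^ 2 * (q : ℝ) ^ (n + 1 - ℓ) ≤ (q : ℝ) ^ (n - 1) := by
      have hp : (0 : ℝ) ≤ (q : ℝ) ^ (n + 1 - ℓ) := by positivity
      calc (n : ℝ) ^ 2 * (q : ℝ) ^ (n + 1 - ℓ)
          ≤ (q : ℝ) ^ (ℓ - 2) * (q : ℝ) ^ (n + 1 - ℓ) :=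
            mul_le_mul_of_nonneg_right hn2 hp
        _ = (q : ℝ) ^ (n - 1) := by rw [← pow_add]; congr 1; omega
    have hqn : 2 * (q : ℝ) ^ (n - 1) ≤ (q : ℝ) ^ n := by
      have : (q : ℝ) ^ n = (q : ℝ) ^ (n - 1) * (q : ℝ) := by
        rw [← pow_succ]; congr 1; omega
      have hp : (0 : ℝ) ≤ (q : ℝ) ^ (n - 1) := by positivity
      nlinarith
    have hNP : (q : ℝ) ^ (n - 1) ≤ (numProfiles q n ℓ : ℝ) := by linarith
    have hdiv : (q : ℝ) ^ (n - 1) / (n : ℝ) < (q : ℝ) ^ (n - 1) := by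
      apply div_lt_self (by positivity)
      exact_mod_cast (by omega : 1 < n)
    linarith
end
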